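/- arXiv:1406.1430 — 5 statements merged into one kernel-verified Lean document; each statement's English description precedes it below -/
import Mathlib

section
/- Let n ≥ 1 and let T^An be the set of multiplicative seminorms x on the Laurent polynomial ring ℂ[z₁^{±1},…,z_n^{±1}] with x(c·1) ≤ ‖c‖ for all c ∈ ℂ, equipped with the topology of pointwise convergence. Then for every x ∈ T^An one has x(z_i) > 0 for each i and log x(e·1) ∈ [0,1] (e = exp(1)), so that Trop(x) := (log x(e·1), (−log x(z₁),…,−log x(z_n))) defines a map Trop : T^An → [0,1] × ℝⁿ. This map is continuous, surjective, and proper in the sense that the preimage of every compact subset of [0,1] × ℝⁿ is compact; consequently Trop is a closed map. -/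
/-- A multiplicative seminorm on a commutative ring `A`. -/
def IsMultSeminorm {A : Type*} [CommRing A] (x : A → ℝ) : Prop :=
  (∀ f, 0 ≤ x f) ∧ x 0 = 0 ∧ x 1 = 1 ∧
    (∀ f g, x (f * g) = x f * x g) ∧ (∀ f g, x (f + g) ≤ x f + x g)

/-- The hybrid norm on `ℂ`: the maximum of the Archimedean and the trivial absolute value. -/
noncomputable def hybridNorm (a : ℂ) : ℝ := if a = 0 then 0 else max ‖a‖ 1

/-- The Laurent polynomial ring `ℂ[z₁^{±1},…,z_n^{±1}]`. -/
abbrev LaurentAlg (n : ℕ) := AddMonoidAlgebra ℂ (Fin n → ℤ)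

/-- The coordinate function `z i`. -/
noncomputable def zVar {n : ℕ} (i : Fin n) : LaurentAlg n :=
  AddMonoidAlgebra.single (Pi.single i 1) 1

/-- The hybrid analytification of the torus `𝔾_m^n`. -/
abbrev TorusHyb (n : ℕ) :=
  {x : LaurentAlg n → ℝ // IsMultSeminorm x ∧
    ∀ c : ℂ, x (algebraMap ℂ (LaurentAlg n) c) ≤ hybridNorm c}

attribute [-instance] HahnSeries.powerSeriesAlgebra

namespace TropAux

variable {n : ℕ}

lemma single_mul_single_neg (m : Fin n → ℤ) :
    (AddMonoidAlgebra.single m (1:ℂ) : LaurentAlg n) * AddMonoidAlgebra.single (-m) 1 = 1 := by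
  rw [AddMonoidAlgebra.single_mul_single]
  simp [AddMonoidAlgebra.one_def]

lemma mul_inv_one (x : TorusHyb n) (m : Fin n → ℤ) :
    x.1 (AddMonoidAlgebra.single m 1) * x.1 (AddMonoidAlgebra.single (-m) 1) = 1 := by
  obtain ⟨⟨_, _, h1, hmul, _⟩, _⟩ := x.2
  rw [← hmul, single_mul_single_neg, h1]

lemma single_pos (x : TorusHyb n) (m : Fin n → ℤ) :
    0 < x.1 (AddMonoidAlgebra.single m 1) := by
  obtain ⟨⟨hpos, _, _, _, _⟩, _⟩ := x.2
  rcases (hpos (AddMonoidAlgebra.single m 1)).lt_or_eq with h | h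
  · exact h
  · exfalso
    have := mul_inv_one x m
    rw [← h, zero_mul] at this
    exact zero_ne_one this

lemma zVar_pos (x : TorusHyb n) (i : Fin n) : 0 < x.1 (zVar i) := single_pos x _

end TropAux

namespace TropAux2
open TropAux
variable {n : ℕ}

lemma hybridNorm_ofReal_exp : hybridNorm ((Real.exp 1 : ℝ) : ℂ) = Real.exp 1 := by
  rw [hybridNorm, if_neg (by exact_mod_cast (Real.exp_pos 1).ne')]
  rw [Complex.norm_real, Real.norm_eq_abs, abs_of_pos (Real.exp_pos 1)]
  exact max_eq_left (by linarith [Real.add_one_le_exp (1:ℝ)])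

lemma lambda_mem (x : TorusHyb n) :
    x.1 (algebraMap ℂ (LaurentAlg n) ((Real.exp 1 : ℝ) : ℂ)) ∈
      Set.Icc (1:ℝ) (Real.exp 1) := by
  obtain ⟨⟨hpos, h0, h1, hmul, hadd⟩, hb⟩ := x.2
  constructor
  · -- x(e) * x(e⁻¹) = 1 and x(e⁻¹) ≤ 1
    have hinv : x.1 (algebraMap ℂ (LaurentAlg n) ((Real.exp 1 : ℝ) : ℂ)) *
        x.1 (algebraMap ℂ (LaurentAlg n) (((Real.exp 1 : ℝ) : ℂ)⁻¹)) = 1 := by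
      rw [← hmul, ← map_mul]
      rw [mul_inv_cancel₀ (by exact_mod_cast (Real.exp_pos 1).ne')]
      simpa [AddMonoidAlgebra.one_def] using h1
    have hle : x.1 (algebraMap ℂ (LaurentAlg n) (((Real.exp 1 : ℝ) : ℂ)⁻¹)) ≤ 1 := by
      refine (hb _).trans ?_
      rw [hybridNorm, if_neg (inv_ne_zero (by exact_mod_cast (Real.exp_pos 1).ne'))]
      apply max_le _ le_rfl
      rw [norm_inv, Complex.norm_real, Real.norm_eq_abs, abs_of_pos (Real.exp_pos 1)]
      rw [inv_le_one_iff₀]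
      right; linarith [Real.add_one_le_exp (1:ℝ)]
    nlinarith [hpos (algebraMap ℂ (LaurentAlg n) ((Real.exp 1 : ℝ) : ℂ)),
      hpos (algebraMap ℂ (LaurentAlg n) (((Real.exp 1 : ℝ) : ℂ)⁻¹))]
  · exact (hb _).trans_eq hybridNorm_ofReal_exp

lemma log_lambda_mem (x : TorusHyb n) :
    Real.log (x.1 (algebraMap ℂ (LaurentAlg n) ((Real.exp 1 : ℝ) : ℂ))) ∈
      Set.Icc (0:ℝ) 1 := by
  obtain ⟨h1, h2⟩ := lambda_mem x
  constructor
  · simpa using Real.log_le_log (by norm_num) h1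
  · calc Real.log _ ≤ Real.log (Real.exp 1) :=
        Real.log_le_log (by linarith) h2
      _ = 1 := Real.log_exp 1

end TropAux2

/-- The map `Trop = λ × trop : T^An → ℝ × ℝⁿ`. -/
noncomputable def TropMap (n : ℕ) (x : TorusHyb n) : ℝ × (Fin n → ℝ) :=
  (Real.log (x.1 (algebraMap ℂ (LaurentAlg n) ((Real.exp 1 : ℝ) : ℂ))),
    fun i => -Real.log (x.1 (zVar i)))

namespace TropAux3
open TropAux TropAux2
variable {n : ℕ}

lemma eval_cont (f : LaurentAlg n) : Continuous (fun x : TorusHyb n => x.1 f) :=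
  (continuous_apply f).comp continuous_subtype_val

lemma tropMap_continuous : Continuous (TropMap n) := by
  apply Continuous.prodMk
  · rw [continuous_iff_continuousAt]
    intro x
    have h1 : ContinuousAt (fun x : TorusHyb n =>
        x.1 (algebraMap ℂ (LaurentAlg n) ((Real.exp 1 : ℝ) : ℂ))) x :=
      (eval_cont _).continuousAt
    exact h1.log (by linarith [(lambda_mem x).1])
  · apply continuous_pi
    intro i
    rw [continuous_iff_continuousAt]
    intro x
    have h1 : ContinuousAt (fun x : TorusHyb n => x.1 (zVar i)) x :=
      (eval_cont _).continuousAt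
    exact (h1.log (zVar_pos x i).ne').neg

end TropAux3

namespace TropSurj
variable {n : ℕ}

noncomputable def evalHom (n : ℕ) (w : Fin n → ℝ) : Multiplicative (Fin n → ℤ) →* ℂ where
  toFun m := Complex.exp (∑ i, (w i : ℂ) * ((Multiplicative.toAdd m) i : ℂ))
  map_one' := by simp
  map_mul' a b := by
    simp [toAdd_mul, Pi.add_apply, Int.cast_add, mul_add, Finset.sum_add_distrib,
      Complex.exp_add]

noncomputable def phi (n : ℕ) (w : Fin n → ℝ) : LaurentAlg n →ₐ[ℂ] ℂ :=
  AddMonoidAlgebra.lift ℂ ℂ (Fin n → ℤ) (evalHom n w)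

lemma phi_single (w : Fin n → ℝ) (m : Fin n → ℤ) (c : ℂ) :
    phi n w (AddMonoidAlgebra.single m c) =
      c * Complex.exp (∑ i, (w i : ℂ) * (m i : ℂ)) := by
  rw [phi, AddMonoidAlgebra.lift_single]
  simp [evalHom, smul_eq_mul]

lemma phi_zVar (w : Fin n → ℝ) (i : Fin n) :
    phi n w (zVar i) = Complex.exp (w i : ℂ) := by
  rw [zVar, phi_single, one_mul]
  congr 1
  rw [Finset.sum_eq_single i]
  · simp
  · intro j _ hj
    simp [Pi.single_apply, hj]
  · simp

noncomputable def xPos (n : ℕ) (t : ℝ) (w : Fin n → ℝ) : LaurentAlg n → ℝ :=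
  fun f => (‖phi n w f‖) ^ t

lemma rpow_subadd {a b t : ℝ} (ha : 0 ≤ a) (hb : 0 ≤ b) (ht : 0 ≤ t) (ht1 : t ≤ 1) :
    (a + b) ^ t ≤ a ^ t + b ^ t := by
  have := NNReal.rpow_add_le_add_rpow (a.toNNReal) (b.toNNReal) ht ht1
  have h := NNReal.coe_le_coe.2 this
  rw [NNReal.coe_add] at h
  rw [NNReal.coe_rpow, NNReal.coe_rpow, NNReal.coe_rpow] at h
  rwa [NNReal.coe_add, Real.coe_toNNReal _ ha, Real.coe_toNNReal _ hb] at h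

lemma xPos_seminorm (t : ℝ) (w : Fin n → ℝ) (ht : 0 < t) (ht1 : t ≤ 1) :
    IsMultSeminorm (xPos n t w) := by
  refine ⟨fun f => Real.rpow_nonneg (norm_nonneg _) _, ?_, ?_, ?_, ?_⟩
  · simp [xPos, Real.zero_rpow ht.ne']
  · simp [xPos]
  · intro f g
    simp only [xPos, map_mul, norm_mul]
    exact Real.mul_rpow (norm_nonneg _) (norm_nonneg _)
  · intro f g
    simp only [xPos, map_add]
    calc (‖phi n w f + phi n w g‖) ^ t
        ≤ (‖phi n w f‖ + ‖phi n w g‖) ^ t := by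
          apply Real.rpow_le_rpow (norm_nonneg _) (norm_add_le _ _) ht.le
      _ ≤ _ := rpow_subadd (norm_nonneg _) (norm_nonneg _) ht.le ht1

lemma xPos_bound (t : ℝ) (w : Fin n → ℝ) (ht : 0 < t) (ht1 : t ≤ 1) (c : ℂ) :
    xPos n t w (algebraMap ℂ (LaurentAlg n) c) ≤ hybridNorm c := by
  have : phi n w (algebraMap ℂ (LaurentAlg n) c) = c := by
    rw [AlgHom.commutes]; simp
  rw [xPos, this, hybridNorm]
  rcases eq_or_ne c 0 with rfl | hc
  · simp [Real.zero_rpow ht.ne']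
  · rw [if_neg hc]
    rcases le_or_gt 1 (‖c‖) with h | h
    · refine le_max_of_le_left ?_
      calc (‖c‖) ^ t ≤ (‖c‖) ^ (1:ℝ) :=
          Real.rpow_le_rpow_of_exponent_le h ht1
        _ = ‖c‖ := Real.rpow_one _
    · exact le_max_of_le_right (Real.rpow_le_one (norm_nonneg _) h.le ht.le)

end TropSurj

namespace TropSurj
variable {n : ℕ}

noncomputable def ptPos (n : ℕ) (t : ℝ) (r : Fin n → ℝ) (ht : 0 < t) (ht1 : t ≤ 1) :
    TorusHyb n :=
  ⟨xPos n t (fun i => -(r i) / t), xPos_seminorm t _ ht ht1, xPos_bound t _ ht ht1⟩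

lemma tropMap_ptPos (t : ℝ) (r : Fin n → ℝ) (ht : 0 < t) (ht1 : t ≤ 1) :
    TropMap n (ptPos n t r ht ht1) = (t, r) := by
  have habs : ∀ a : ℝ, ‖(Complex.exp (a : ℂ))‖ = Real.exp a := by
    intro a; rw [Complex.norm_exp]; norm_num
  refine Prod.ext ?_ ?_
  · show Real.log (xPos n t _ (algebraMap ℂ (LaurentAlg n) _)) = t
    have : phi n (fun i => -(r i) / t) (algebraMap ℂ (LaurentAlg n) ((Real.exp 1 : ℝ) : ℂ)) =
        ((Real.exp 1 : ℝ) : ℂ) := by rw [AlgHom.commutes]; simp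
    rw [xPos, this, Complex.norm_real, Real.norm_eq_abs, abs_of_pos (Real.exp_pos 1),
      Real.exp_one_rpow, Real.log_exp]
  · show (fun i => -Real.log (xPos n t _ (zVar i))) = r
    funext i
    rw [xPos, phi_zVar, habs, ← Real.exp_one_rpow (-(r i)/t),
      ← Real.rpow_mul (Real.exp_pos 1).le, div_mul_cancel₀ _ ht.ne',
      Real.exp_one_rpow, Real.log_exp, neg_neg]

end TropSurj

namespace TropSurj0
variable {n : ℕ}

noncomputable def hahnHom (n : ℕ) (r : Fin n → ℝ) :
    Multiplicative (Fin n → ℤ) →* HahnSeries ℝ ℂ where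
  toFun m := HahnSeries.single (∑ i, r i * ((Multiplicative.toAdd m) i : ℝ)) 1
  map_one' := by simp [HahnSeries.single_zero_one]
  map_mul' a b := by
    rw [HahnSeries.single_mul_single, one_mul]
    simp [toAdd_mul, Pi.add_apply, Int.cast_add, mul_add, Finset.sum_add_distrib]

noncomputable def phi0 (n : ℕ) (r : Fin n → ℝ) : LaurentAlg n →ₐ[ℂ] HahnSeries ℝ ℂ :=
  AddMonoidAlgebra.lift ℂ (HahnSeries ℝ ℂ) (Fin n → ℤ) (hahnHom n r)

lemma phi0_single (r : Fin n → ℝ) (m : Fin n → ℤ) (c : ℂ) :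
    phi0 n r (AddMonoidAlgebra.single m c) =
      HahnSeries.single (∑ i, r i * (m i : ℝ)) c := by
  rw [phi0, AddMonoidAlgebra.lift_single]
  rw [Algebra.smul_def]
  rw [← HahnSeries.C_eq_algebraMap, HahnSeries.C_apply]
  show _ * HahnSeries.single (∑ i, r i * ((m : Fin n → ℤ) i : ℝ)) (1:ℂ) = _
  rw [HahnSeries.single_mul_single, zero_add, mul_one]

open scoped Classical in
noncomputable def x0 (n : ℕ) (r : Fin n → ℝ) : LaurentAlg n → ℝ :=
  fun f => if phi0 n r f = 0 then 0 else Real.exp (-(phi0 n r f).order)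

end TropSurj0

namespace TropSurj0
variable {n : ℕ}

lemma x0_nonneg (r : Fin n → ℝ) (f : LaurentAlg n) : 0 ≤ x0 n r f := by
  rw [x0]; split
  · exact le_rfl
  · exact (Real.exp_pos _).le

lemma x0_seminorm (r : Fin n → ℝ) : IsMultSeminorm (x0 n r) := by
  refine ⟨x0_nonneg r, ?_, ?_, ?_, ?_⟩
  · simp [x0]
  · rw [x0, if_neg (by simp), map_one, HahnSeries.order_one, neg_zero, Real.exp_zero]
  · intro f g
    rcases eq_or_ne (phi0 n r f) 0 with hf | hf
    · simp [x0, map_mul, hf]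
    rcases eq_or_ne (phi0 n r g) 0 with hg | hg
    · simp [x0, map_mul, hg]
    rw [x0, x0, x0, map_mul, if_neg (mul_ne_zero hf hg), if_neg hf, if_neg hg,
      HahnSeries.order_mul hf hg, neg_add, Real.exp_add]
  · intro f g
    rcases eq_or_ne (phi0 n r (f + g)) 0 with hfg | hfg
    · rw [x0, if_pos hfg]
      exact add_nonneg (x0_nonneg r f) (x0_nonneg r g)
    rcases eq_or_ne (phi0 n r f) 0 with hf | hf
    · have h2 : phi0 n r (f + g) = phi0 n r g := by rw [map_add, hf, zero_add]
      have : x0 n r f = 0 := by rw [x0, if_pos hf]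
      rw [this, zero_add]
      rw [x0, x0, h2]
    rcases eq_or_ne (phi0 n r g) 0 with hg | hg
    · have h2 : phi0 n r (f + g) = phi0 n r f := by rw [map_add, hg, add_zero]
      have : x0 n r g = 0 := by rw [x0, if_pos hg]
      rw [this, add_zero]
      rw [x0, x0, h2]
    · rw [x0, x0, x0, if_neg hfg, if_neg hf, if_neg hg]
      have horder : min (phi0 n r f).order (phi0 n r g).order ≤ (phi0 n r (f+g)).order := by
        rw [map_add] at hfg ⊢
        exact HahnSeries.min_order_le_order_add hfg
      have h1 : Real.exp (-(phi0 n r (f+g)).order) ≤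
          Real.exp (-(min (phi0 n r f).order (phi0 n r g).order)) :=
        Real.exp_le_exp.2 (neg_le_neg horder)
      refine h1.trans ?_
      rcases min_cases (phi0 n r f).order (phi0 n r g).order with ⟨h, _⟩ | ⟨h, _⟩ <;> rw [h]
      · exact le_add_of_nonneg_right (Real.exp_pos _).le
      · exact le_add_of_nonneg_left (Real.exp_pos _).le

lemma x0_bound (r : Fin n → ℝ) (c : ℂ) :
    x0 n r (algebraMap ℂ (LaurentAlg n) c) ≤ hybridNorm c := by
  have h : phi0 n r (algebraMap ℂ (LaurentAlg n) c) = HahnSeries.single (0:ℝ) c := by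
    rw [AlgHom.commutes]
    rw [← HahnSeries.C_eq_algebraMap, HahnSeries.C_apply]
  rcases eq_or_ne c 0 with rfl | hc
  · simp [x0, h, hybridNorm]
  · rw [x0, h, if_neg (HahnSeries.single_ne_zero hc), HahnSeries.order_single hc,
      neg_zero, Real.exp_zero, hybridNorm, if_neg hc]
    exact le_max_right _ _

noncomputable def pt0 (n : ℕ) (r : Fin n → ℝ) : TorusHyb n :=
  ⟨x0 n r, x0_seminorm r, x0_bound r⟩

lemma tropMap_pt0 (r : Fin n → ℝ) : TropMap n (pt0 n r) = (0, r) := by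
  refine Prod.ext ?_ ?_
  · show Real.log (x0 n r (algebraMap ℂ (LaurentAlg n) _)) = 0
    have h : phi0 n r (algebraMap ℂ (LaurentAlg n) ((Real.exp 1 : ℝ) : ℂ)) =
        HahnSeries.single (0:ℝ) ((Real.exp 1 : ℝ) : ℂ) := by
      rw [AlgHom.commutes, ← HahnSeries.C_eq_algebraMap, HahnSeries.C_apply]
    have hc : ((Real.exp 1 : ℝ) : ℂ) ≠ 0 := by exact_mod_cast (Real.exp_pos 1).ne'
    rw [x0, h, if_neg (HahnSeries.single_ne_zero hc), HahnSeries.order_single hc,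
      neg_zero, Real.exp_zero, Real.log_one]
  · show (fun i => -Real.log (x0 n r (zVar i))) = r
    funext i
    have h : phi0 n r (zVar i) = HahnSeries.single (r i) 1 := by
      rw [zVar, phi0_single]
      congr 1
      rw [Finset.sum_eq_single i]
      · simp
      · intro j _ hj; simp [Pi.single_apply, hj]
      · simp
    rw [x0, h, if_neg (HahnSeries.single_ne_zero one_ne_zero),
      HahnSeries.order_single one_ne_zero, Real.log_exp, neg_neg]

end TropSurj0

namespace TropMain
open TropAux TropAux2 TropAux3 TropSurj TropSurj0
variable {n : ℕ}

lemma tropMap_range (n : ℕ) :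
    Set.range (TropMap n) = Set.Icc (0 : ℝ) 1 ×ˢ (Set.univ : Set (Fin n → ℝ)) := by
  ext y
  constructor
  · rintro ⟨x, rfl⟩
    exact ⟨log_lambda_mem x, Set.mem_univ _⟩
  · rintro ⟨⟨h0, h1⟩, -⟩
    obtain ⟨t, r⟩ := y
    rcases eq_or_lt_of_le h0 with h | h
    · exact ⟨pt0 n r, by rw [tropMap_pt0]; exact congrArg (·, r) h⟩
    · exact ⟨ptPos n t r h h1, tropMap_ptPos t r h h1⟩

end TropMain

namespace TropProper
open TropAux TropAux2 TropAux3
variable {n : ℕ}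

lemma x_single_add (x : TorusHyb n) (a b : Fin n → ℤ) :
    x.1 (AddMonoidAlgebra.single (a + b) (1:ℂ)) =
      x.1 (AddMonoidAlgebra.single a 1) * x.1 (AddMonoidAlgebra.single b 1) := by
  obtain ⟨⟨_, _, _, hmul, _⟩, _⟩ := x.2
  rw [← hmul, AddMonoidAlgebra.single_mul_single, one_mul]

lemma x_single_sum {ι : Type*} (x : TorusHyb n) (s : Finset ι) (g : ι → (Fin n → ℤ)) :
    x.1 (AddMonoidAlgebra.single (∑ i ∈ s, g i) (1:ℂ)) =
      ∏ i ∈ s, x.1 (AddMonoidAlgebra.single (g i) 1) := by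
  classical
  induction s using Finset.cons_induction with
  | empty =>
    obtain ⟨⟨_, _, h1, _, _⟩, _⟩ := x.2
    simpa [AddMonoidAlgebra.one_def] using h1
  | cons i s hi ih =>
    rw [Finset.sum_cons, Finset.prod_cons, x_single_add, ih]

lemma x_single_pi_nat (x : TorusHyb n) (i : Fin n) (k : ℕ) :
    x.1 (AddMonoidAlgebra.single (Pi.single i (k:ℤ)) (1:ℂ)) = x.1 (zVar i) ^ k := by
  induction k with
  | zero =>
    obtain ⟨⟨_, _, h1, _, _⟩, _⟩ := x.2
    simpa [AddMonoidAlgebra.one_def] using h1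
  | succ k ih =>
    have : (Pi.single i ((k+1 : ℕ):ℤ) : Fin n → ℤ) = Pi.single i (k:ℤ) + Pi.single i 1 := by
      rw [← Pi.single_add]; norm_num
    rw [this, x_single_add, ih, zVar, pow_succ]

lemma zpow_natAbs_bound {a M : ℝ} (ha : 0 < a) (hM : a ≤ M) (hM' : a⁻¹ ≤ M) (k : ℤ) :
    a ^ k ≤ M ^ k.natAbs := by
  rcases le_or_gt 0 k with hk | hk
  · have h1 : a ^ k = a ^ (k.natAbs) := by
      rw [← zpow_natCast, Int.natAbs_of_nonneg hk]
    rw [h1]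
    exact pow_le_pow_left₀ ha.le hM _
  · have h1 : a ^ k = a⁻¹ ^ (k.natAbs) := by
      rw [← zpow_natCast, Int.ofNat_natAbs_of_nonpos hk.le, inv_zpow, ← zpow_neg, neg_neg]
    rw [h1]
    exact pow_le_pow_left₀ (inv_nonneg.2 ha.le) hM' _

lemma x_single_pi_bound (x : TorusHyb n) (R : ℝ)
    (h : ∀ i, x.1 (zVar i) ∈ Set.Icc (Real.exp (-R)) (Real.exp R))
    (i : Fin n) (k : ℤ) :
    x.1 (AddMonoidAlgebra.single (Pi.single i k) (1:ℂ)) ≤ Real.exp R ^ k.natAbs := by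
  have hpos := zVar_pos x i
  have hinv : (x.1 (zVar i))⁻¹ ≤ Real.exp R := by
    rw [inv_le_comm₀ hpos (Real.exp_pos R)]
    rw [← Real.exp_neg]
    exact (h i).1
  rcases Int.natAbs_eq k with hk | hk
  · rw [hk, x_single_pi_nat]
    exact pow_le_pow_left₀ hpos.le (h i).2 _
  · have hsplit : x.1 (AddMonoidAlgebra.single (Pi.single i k) (1:ℂ)) *
        x.1 (AddMonoidAlgebra.single (Pi.single i (k.natAbs : ℤ)) (1:ℂ)) = 1 := by
      have := TropAux.mul_inv_one x (Pi.single i k)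
      have hneg : (-(Pi.single i k) : Fin n → ℤ) = Pi.single i ((k.natAbs : ℤ)) := by
        rw [← Pi.single_neg, hk]; norm_num
      rwa [hneg] at this
    have h2 : x.1 (AddMonoidAlgebra.single (Pi.single i k) (1:ℂ)) =
        (x.1 (zVar i) ^ k.natAbs)⁻¹ := by
      rw [x_single_pi_nat] at hsplit
      field_simp at hsplit ⊢
      linarith [hsplit]
    rw [h2, ← inv_pow]
    exact pow_le_pow_left₀ (inv_nonneg.2 hpos.le) hinv _

lemma x_single_eq_prod_bound (x : TorusHyb n) (R : ℝ)
    (h : ∀ i, x.1 (zVar i) ∈ Set.Icc (Real.exp (-R)) (Real.exp R)) (m : Fin n → ℤ) :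
    x.1 (AddMonoidAlgebra.single m (1:ℂ)) ≤ ∏ i, Real.exp R ^ (m i).natAbs := by
  have hm : m = ∑ i, Pi.single i (m i) := (Finset.univ_sum_single m).symm
  have heq : x.1 (AddMonoidAlgebra.single m (1:ℂ)) =
      ∏ i, x.1 (AddMonoidAlgebra.single (Pi.single i (m i)) (1:ℂ)) := by
    conv_lhs => rw [hm]
    exact x_single_sum x Finset.univ _
  rw [heq]
  apply Finset.prod_le_prod
  · intro i _
    exact (single_pos x _).le
  · intro i _
    exact x_single_pi_bound x R h i (m i)

end TropProper

namespace TropProper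
variable {n : ℕ}

lemma x_sum_le {ι : Type*} (x : TorusHyb n) (s : Finset ι) (g : ι → LaurentAlg n) :
    x.1 (∑ i ∈ s, g i) ≤ ∑ i ∈ s, x.1 (g i) := by
  classical
  obtain ⟨⟨hpos, h0, _, _, hadd⟩, _⟩ := x.2
  induction s using Finset.cons_induction with
  | empty => simp [h0]
  | cons i s hi ih =>
    rw [Finset.sum_cons, Finset.sum_cons]
    exact (hadd _ _).trans (by linarith)

lemma x_single_coeff (x : TorusHyb n) (m : Fin n → ℤ) (c : ℂ) :
    x.1 (AddMonoidAlgebra.single m c) ≤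
      hybridNorm c * x.1 (AddMonoidAlgebra.single m (1:ℂ)) := by
  obtain ⟨⟨hpos, _, _, hmul, _⟩, hb⟩ := x.2
  have hsplit : (AddMonoidAlgebra.single m c : LaurentAlg n) =
      algebraMap ℂ (LaurentAlg n) c * AddMonoidAlgebra.single m 1 := by
    rw [AddMonoidAlgebra.coe_algebraMap]
    show AddMonoidAlgebra.single m c =
      AddMonoidAlgebra.single (0 : Fin n → ℤ) c * AddMonoidAlgebra.single m 1
    rw [AddMonoidAlgebra.single_mul_single, zero_add, mul_one]
  rw [hsplit, hmul]
  exact mul_le_mul_of_nonneg_right (hb c) (hpos _)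

/-- The key uniform bound on `x f` for `x` with monomial values in a fixed window. -/
lemma x_le_bound (x : TorusHyb n) (R : ℝ)
    (h : ∀ i, x.1 (zVar i) ∈ Set.Icc (Real.exp (-R)) (Real.exp R)) (f : LaurentAlg n) :
    x.1 f ≤ ∑ m ∈ f.coeff.support, hybridNorm (f.coeff m) * ∏ i, Real.exp R ^ (m i).natAbs := by
  have hdecomp : f = ∑ m ∈ f.coeff.support, AddMonoidAlgebra.single m (f.coeff m) := by
    apply AddMonoidAlgebra.coeff_injective
    rw [AddMonoidAlgebra.coeff_sum]
    simp only [AddMonoidAlgebra.coeff_single]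
    exact (Finsupp.sum_single f.coeff).symm
  calc x.1 f = x.1 (∑ m ∈ f.coeff.support, AddMonoidAlgebra.single m (f.coeff m)) := by rw [← hdecomp]
    _ ≤ ∑ m ∈ f.coeff.support, x.1 (AddMonoidAlgebra.single m (f.coeff m)) := x_sum_le x _ _
    _ ≤ ∑ m ∈ f.coeff.support, hybridNorm (f.coeff m) * ∏ i, Real.exp R ^ (m i).natAbs := by
        apply Finset.sum_le_sum
        intro m _
        refine (x_single_coeff x m (f.coeff m)).trans ?_
        apply mul_le_mul_of_nonneg_left (x_single_eq_prod_bound x R h m) ?_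
        rw [hybridNorm]
        split
        · exact le_rfl
        · positivity

end TropProper

namespace TropProper
variable {n : ℕ}

lemma isClosed_seminorm : IsClosed {x : LaurentAlg n → ℝ | IsMultSeminorm x} := by
  have hset : {x : LaurentAlg n → ℝ | IsMultSeminorm x} =
      (⋂ f, {x : LaurentAlg n → ℝ | 0 ≤ x f}) ∩ ({x | x 0 = 0} ∩ ({x | x 1 = 1} ∩
        ((⋂ f, ⋂ g, {x : LaurentAlg n → ℝ | x (f*g) = x f * x g}) ∩
         (⋂ f, ⋂ g, {x : LaurentAlg n → ℝ | x (f+g) ≤ x f + x g})))) := by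
    ext x
    simp only [IsMultSeminorm, Set.mem_inter_iff, Set.mem_iInter, Set.mem_setOf_eq]
  rw [hset]
  refine (isClosed_iInter fun f => isClosed_le continuous_const (continuous_apply f)).inter
    ((isClosed_eq (continuous_apply 0) continuous_const).inter
    ((isClosed_eq (continuous_apply 1) continuous_const).inter
    ((isClosed_iInter fun f => isClosed_iInter fun g =>
        isClosed_eq (continuous_apply (f*g))
          ((continuous_apply f).mul (continuous_apply g))).inter
     (isClosed_iInter fun f => isClosed_iInter fun g =>
        isClosed_le (continuous_apply (f+g))
          ((continuous_apply f).add (continuous_apply g))))))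

lemma isClosed_base : IsClosed {x : LaurentAlg n → ℝ | IsMultSeminorm x ∧
    ∀ c : ℂ, x (algebraMap ℂ (LaurentAlg n) c) ≤ hybridNorm c} := by
  have hset : {x : LaurentAlg n → ℝ | IsMultSeminorm x ∧
      ∀ c : ℂ, x (algebraMap ℂ (LaurentAlg n) c) ≤ hybridNorm c} =
      {x : LaurentAlg n → ℝ | IsMultSeminorm x} ∩
      ⋂ c : ℂ, {x : LaurentAlg n → ℝ | x (algebraMap ℂ (LaurentAlg n) c) ≤ hybridNorm c} := by
    ext x
    simp only [Set.mem_inter_iff, Set.mem_iInter, Set.mem_setOf_eq]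
  rw [hset]
  exact isClosed_seminorm.inter
    (isClosed_iInter fun c => isClosed_le (continuous_apply _) continuous_const)

def window (n : ℕ) (R : ℝ) : Set (LaurentAlg n → ℝ) :=
  {x | (IsMultSeminorm x ∧
      ∀ c : ℂ, x (algebraMap ℂ (LaurentAlg n) c) ≤ hybridNorm c) ∧
    ∀ i, x (zVar i) ∈ Set.Icc (Real.exp (-R)) (Real.exp R)}

lemma isClosed_window (R : ℝ) : IsClosed (window n R) := by
  have hset : window n R = {x : LaurentAlg n → ℝ | IsMultSeminorm x ∧
      ∀ c : ℂ, x (algebraMap ℂ (LaurentAlg n) c) ≤ hybridNorm c} ∩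
      ⋂ i : Fin n, (fun x : LaurentAlg n → ℝ => x (zVar i)) ⁻¹'
        Set.Icc (Real.exp (-R)) (Real.exp R) := by
    ext x
    simp only [window, Set.mem_inter_iff, Set.mem_iInter, Set.mem_setOf_eq, Set.mem_preimage]
  rw [hset]
  exact isClosed_base.inter
    (isClosed_iInter fun i => IsClosed.preimage (continuous_apply _) isClosed_Icc)

lemma isCompact_window (R : ℝ) : IsCompact (window n R) := by
  apply IsCompact.of_isClosed_subset
    (isCompact_univ_pi (fun f : LaurentAlg n =>
      isCompact_Icc (a := (0:ℝ))
        (b := ∑ m ∈ f.coeff.support, hybridNorm (f.coeff m) * ∏ i, Real.exp R ^ (m i).natAbs)))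
    (isClosed_window R)
  intro x hx
  rw [Set.mem_univ_pi]
  intro f
  obtain ⟨⟨hsn, hb⟩, hw⟩ := hx
  refine ⟨hsn.1 f, ?_⟩
  exact x_le_bound ⟨x, hsn, hb⟩ R hw f

end TropProper

namespace TropProper
open TropAux TropAux3
variable {n : ℕ}

lemma tropMap_proper (n : ℕ) (K : Set (ℝ × (Fin n → ℝ))) (hK : IsCompact K) :
    IsCompact (TropMap n ⁻¹' K) := by
  obtain ⟨R, hR⟩ := hK.isBounded.subset_closedBall 0
  have hemb : Topology.IsClosedEmbedding
      (Subtype.val : TorusHyb n → (LaurentAlg n → ℝ)) :=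
    (isClosed_base (n := n)).isClosedEmbedding_subtypeVal
  rw [hemb.isEmbedding.isCompact_iff]
  apply IsCompact.of_isClosed_subset (isCompact_window R)
  · exact hemb.isClosedMap _ (IsClosed.preimage tropMap_continuous hK.isClosed)
  · rintro _ ⟨x, hx, rfl⟩
    refine ⟨x.2, fun i => ?_⟩
    have hball := hR hx
    rw [Metric.mem_closedBall, dist_zero_right] at hball
    have h2 : ‖(TropMap n x).2‖ ≤ R := (norm_snd_le _).trans hball
    have h3 : |(TropMap n x).2 i| ≤ R := by
      calc |(TropMap n x).2 i| = ‖(TropMap n x).2 i‖ := rfl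
        _ ≤ ‖(TropMap n x).2‖ := norm_le_pi_norm _ i
        _ ≤ R := h2
    have h4 : |Real.log (x.1 (zVar i))| ≤ R := by
      rw [show (TropMap n x).2 i = -Real.log (x.1 (zVar i)) from rfl, abs_neg] at h3
      exact h3
    rw [abs_le] at h4
    constructor
    · calc Real.exp (-R) ≤ Real.exp (Real.log (x.1 (zVar i))) :=
          Real.exp_le_exp.2 (by linarith [h4.1])
        _ = x.1 (zVar i) := Real.exp_log (zVar_pos x i)
    · calc x.1 (zVar i) = Real.exp (Real.log (x.1 (zVar i))) :=
          (Real.exp_log (zVar_pos x i)).symm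
        _ ≤ Real.exp R := Real.exp_le_exp.2 h4.2

lemma tropMap_isProperMap (n : ℕ) : IsProperMap (TropMap n) :=
  isProperMap_iff_isCompact_preimage.2
    ⟨tropMap_continuous, fun K hK => tropMap_proper n K hK⟩

end TropProper

/-- Proposition 2.1 for the torus: `Trop` is well defined (`x(z_i) > 0`, `λ(x) ∈ [0,1]`),
continuous, surjective onto `[0,1] × ℝⁿ`, proper, and (consequently) closed as a map
onto `[0,1] × ℝⁿ`. -/
theorem tropMap_continuous_proper_surjective_closed (n : ℕ) (hn : 1 ≤ n) :
    (∀ x : TorusHyb n, ∀ i : Fin n, 0 < x.1 (zVar i)) ∧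
    (∀ x : TorusHyb n,
      Real.log (x.1 (algebraMap ℂ (LaurentAlg n) ((Real.exp 1 : ℝ) : ℂ))) ∈
        Set.Icc (0 : ℝ) 1) ∧
    Continuous (TropMap n) ∧
    Set.range (TropMap n) = Set.Icc (0 : ℝ) 1 ×ˢ (Set.univ : Set (Fin n → ℝ)) ∧
    (∀ K : Set (ℝ × (Fin n → ℝ)), IsCompact K → IsCompact (TropMap n ⁻¹' K)) ∧
    (∀ C : Set (TorusHyb n), IsClosed C →
      ∃ D : Set (ℝ × (Fin n → ℝ)), IsClosed D ∧
        TropMap n '' C = D ∩ (Set.Icc (0 : ℝ) 1 ×ˢ (Set.univ : Set (Fin n → ℝ)))) := by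
  refine ⟨fun x i => TropAux.zVar_pos x i, fun x => TropAux2.log_lambda_mem x,
    TropAux3.tropMap_continuous, TropMain.tropMap_range n,
    fun K hK => TropProper.tropMap_proper n K hK, ?_⟩
  intro C hC
  refine ⟨TropMap n '' C, (TropProper.tropMap_isProperMap n).isClosedMap C hC, ?_⟩
  symm
  apply Set.inter_eq_self_of_subset_left
  rintro y ⟨x, -, rfl⟩
  exact ⟨TropAux2.log_lambda_mem x, Set.mem_univ _⟩
end

section
/- Let A be a finitely generated commutative ℂ-algebra, let ρ ∈ (0,1], and let x be a multiplicative seminorm on A such that x(c·1_A) = |c|^ρ for all c ∈ ℂ. Then there exists a unique ℂ-algebra homomorphism φ : A → ℂ such that x(f) = |φ(f)|^ρ for all f ∈ A. -/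
open Polynomial in
lemma GM.prod_identity {A : Type*} [CommRing A] [Algebra ℂ A]
    (b : A) (ε : ℂ) {n : ℕ} (hn : 0 < n) :
    ∏ ζ ∈ Polynomial.nthRootsFinset n (1 : ℂ), (b - algebraMap ℂ A (ζ * ε))
      = b ^ n - algebraMap ℂ A (ε ^ n) := by
  have hζ := Complex.isPrimitiveRoot_exp n hn.ne'
  have hpoly : (X : ℂ[X]) ^ n - C (ε ^ n)
      = ∏ ζ ∈ nthRootsFinset n (1 : ℂ), (X - C (ζ * ε)) := by
    apply Polynomial.funext
    intro z
    simp only [eval_prod, eval_sub, eval_pow, eval_X, eval_C]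
    exact hζ.pow_sub_pow_eq_prod_sub_mul (x := z) (y := ε) hn
  have := congrArg (Polynomial.aeval b) hpoly
  simp only [map_sub, map_pow, map_prod, aeval_X, aeval_C, map_pow] at this
  rw [← this, map_pow]

open Filter Topology in
lemma GM.exists_spec {A : Type*} [CommRing A] [Algebra ℂ A]
    {ρ : ℝ} (hρ0 : 0 < ρ)
    (x : A → ℝ) (hx : IsMultSeminorm x)
    (hres : ∀ c : ℂ, x (algebraMap ℂ A c) = ‖c‖ ^ ρ)
    (f : A) : ∃ c : ℂ, x (f - algebraMap ℂ A c) = 0 := by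
  obtain ⟨hnn, hx0, hx1, hmul, hadd⟩ := hx
  have hneg : ∀ g : A, x (-g) = x g := by
    intro g
    have h1 : x (algebraMap ℂ A (-1)) = 1 := by
      rw [hres]; simp [Real.one_rpow]
    rw [map_neg, map_one] at h1
    calc x (-g) = x ((-1) * g) := by ring_nf
    _ = x g := by rw [hmul, h1, one_mul]
  set F : ℂ → ℝ := fun c => x (f - algebraMap ℂ A c) with hF
  have hFd : ∀ c c' : ℂ, F c ≤ F c' + ‖c - c'‖ ^ ρ := by
    intro c c'
    have : f - algebraMap ℂ A c = (f - algebraMap ℂ A c') + algebraMap ℂ A (c' - c) := by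
      rw [map_sub]; ring
    calc F c = x ((f - algebraMap ℂ A c') + algebraMap ℂ A (c' - c)) := congrArg x this
    _ ≤ F c' + x (algebraMap ℂ A (c' - c)) := hadd _ _
    _ = F c' + ‖c - c'‖ ^ ρ := by rw [hres, norm_sub_rev]
  have hFcont : Continuous F := by
    rw [Metric.continuous_iff]
    intro c εp hεp
    refine ⟨εp ^ (1/ρ), Real.rpow_pos_of_pos hεp _, fun c' hd => ?_⟩
    have habs : |F c' - F c| ≤ ‖c' - c‖ ^ ρ := by
      have hsym : ‖c - c'‖ = ‖c' - c‖ := norm_sub_rev c c'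
      have h2 := hFd c c'
      rw [hsym] at h2
      rw [abs_sub_le_iff]
      constructor
      · linarith [hFd c' c]
      · linarith
    have hlt : ‖c' - c‖ ^ ρ < εp := by
      rw [Complex.dist_eq] at hd
      calc ‖c' - c‖ ^ ρ < (εp ^ (1/ρ)) ^ ρ :=
            Real.rpow_lt_rpow (norm_nonneg _) hd hρ0
      _ = εp := by
          rw [← Real.rpow_mul hεp.le, one_div_mul_cancel hρ0.ne', Real.rpow_one]
    rw [Real.dist_eq]
    exact lt_of_le_of_lt habs hlt
  have habs_alg : ∀ c : ℂ, x (algebraMap ℂ A c - f) = F c := by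
    intro c
    have : algebraMap ℂ A c - f = -(f - algebraMap ℂ A c) := by ring
    rw [this, hneg]
  have hFlow : ∀ c : ℂ, ‖c‖ ^ ρ ≤ F c + x f := by
    intro c
    have : algebraMap ℂ A c = (algebraMap ℂ A c - f) + f := by ring
    calc ‖c‖ ^ ρ = x (algebraMap ℂ A c) := (hres c).symm
    _ = x ((algebraMap ℂ A c - f) + f) := congrArg x this
    _ ≤ x (algebraMap ℂ A c - f) + x f := hadd _ _
    _ = F c + x f := by rw [habs_alg]
  -- a real number whose ρ-th power exceeds any bound
  have hrpow_inv : ∀ t : ℝ, 0 ≤ t → (t ^ (1/ρ)) ^ ρ = t := by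
    intro t ht
    rw [← Real.rpow_mul ht, one_div_mul_cancel hρ0.ne', Real.rpow_one]
  set R : ℝ := (x f + F 0 + 1) ^ (1/ρ) with hR
  have hbase : (0:ℝ) ≤ x f + F 0 + 1 := by
    have := hnn f; have := hnn (f - algebraMap ℂ A 0); simp only [hF]; linarith
  have hR0 : 0 ≤ R := Real.rpow_nonneg hbase _
  obtain ⟨c₀, hc₀mem, hc₀min⟩ := (isCompact_closedBall (0:ℂ) R).exists_isMinOn
    ⟨0, Metric.mem_closedBall_self hR0⟩ hFcont.continuousOn
  set m := F c₀ with hm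
  have hm0 : 0 ≤ m := hnn _
  have hglob : ∀ c : ℂ, m ≤ F c := by
    intro c
    by_cases hc : c ∈ Metric.closedBall (0:ℂ) R
    · exact hc₀min hc
    · have h0mem : (0:ℂ) ∈ Metric.closedBall (0:ℂ) R := Metric.mem_closedBall_self hR0
      have hm0F : m ≤ F 0 := hc₀min h0mem
      have hclt : R < ‖c‖ := by
        simpa [Complex.dist_eq, Metric.mem_closedBall] using hc
      have : (x f + F 0 + 1) < ‖c‖ ^ ρ := by
        calc x f + F 0 + 1 = R ^ ρ := (hrpow_inv _ hbase).symm
        _ < ‖c‖ ^ ρ := Real.rpow_lt_rpow hR0 hclt hρ0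
      have := hFlow c
      linarith
  -- multiplicativity over products and powers
  have hxpow : ∀ (g : A) (n : ℕ), x (g ^ n) = x g ^ n := by
    intro g n
    induction n with
    | zero => simp [hx1]
    | succ k ih => rw [pow_succ, pow_succ, hmul, ih]
  have hxprod : ∀ (s : Finset ℂ) (g : ℂ → A), x (∏ i ∈ s, g i) = ∏ i ∈ s, x (g i) := by
    intro s g
    induction s using Finset.induction with
    | empty => simp [hx1]
    | insert _ _ hns ih => rw [Finset.prod_insert hns, Finset.prod_insert hns, hmul, ih]
  -- the key local constancy estimate
  have key : 0 < m → ∀ c : ℂ, F c = m → ∀ ε : ℂ, ‖ε‖ ^ ρ < m → F (c + ε) = m := by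
    intro hpos c hc ε hε
    set t := ‖ε‖ ^ ρ with htdef
    have ht0 : 0 ≤ t := Real.rpow_nonneg (norm_nonneg _) _
    refine le_antisymm ?_ (hc ▸ hglob (c + ε))
    have est : ∀ k : ℕ, F (c + ε) ≤ m + t * (t/m)^k := by
      intro k
      set n := k + 1 with hn
      have hnpos : 0 < n := Nat.succ_pos k
      have hζcard := (Complex.isPrimitiveRoot_exp n hnpos.ne').card_nthRootsFinset
      set b : A := f - algebraMap ℂ A c with hb
      have hfac : ∀ ζ : ℂ, b - algebraMap ℂ A (ζ * ε) = f - algebraMap ℂ A (c + ζ * ε) := by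
        intro ζ; rw [hb, map_add]; ring
      have hup : ∏ ζ ∈ Polynomial.nthRootsFinset n (1 : ℂ), F (c + ζ * ε) ≤ m ^ n + t ^ n := by
        have h1 : ∏ ζ ∈ Polynomial.nthRootsFinset n (1 : ℂ), F (c + ζ * ε)
            = x (b ^ n - algebraMap ℂ A (ε ^ n)) := by
          rw [← GM.prod_identity b ε hnpos, hxprod]
          exact Finset.prod_congr rfl fun ζ _ => by rw [hfac ζ]
        have h2 : x (b ^ n - algebraMap ℂ A (ε ^ n)) ≤ x (b ^ n) + x (algebraMap ℂ A (ε ^ n)) := by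
          have : b ^ n - algebraMap ℂ A (ε ^ n) = b ^ n + (-(algebraMap ℂ A (ε ^ n))) := by ring
          rw [this]
          calc x (b ^ n + -(algebraMap ℂ A (ε ^ n)))
              ≤ x (b ^ n) + x (-(algebraMap ℂ A (ε ^ n))) := hadd _ _
          _ = x (b ^ n) + x (algebraMap ℂ A (ε ^ n)) := by rw [hneg]
        have h3 : x (b ^ n) = m ^ n := by rw [hxpow, hb, ← hc]
        have h4 : x (algebraMap ℂ A (ε ^ n)) = t ^ n := by
          rw [hres, norm_pow, ← Real.rpow_natCast (‖ε‖) n,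
            ← Real.rpow_mul (norm_nonneg _), mul_comm,
            Real.rpow_mul (norm_nonneg _), Real.rpow_natCast]
        rw [h1]; rw [h3, h4] at h2; exact h2
      have hlo : F (c + ε) * m ^ k ≤ ∏ ζ ∈ Polynomial.nthRootsFinset n (1 : ℂ), F (c + ζ * ε) := by
        have hone : (1:ℂ) ∈ Polynomial.nthRootsFinset n (1 : ℂ) :=
          Polynomial.one_mem_nthRootsFinset hnpos
        rw [← Finset.mul_prod_erase _ _ hone, one_mul]
        have hcard : ((Polynomial.nthRootsFinset n (1 : ℂ)).erase 1).card = k := by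
          rw [Finset.card_erase_of_mem hone, hζcard]
          rfl
        have : m ^ k ≤ ∏ ζ ∈ (Polynomial.nthRootsFinset n (1 : ℂ)).erase 1, F (c + ζ * ε) := by
          calc m ^ k = ∏ _ζ ∈ (Polynomial.nthRootsFinset n (1 : ℂ)).erase 1, m := by
                rw [Finset.prod_const, hcard]
          _ ≤ _ := Finset.prod_le_prod (fun _ _ => hm0) (fun ζ _ => hglob _)
        exact mul_le_mul_of_nonneg_left this (hnn _)
      have hmk : (0:ℝ) < m ^ k := pow_pos hpos k
      calc F (c + ε) ≤ (m ^ n + t ^ n) / m ^ k := by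
            rw [le_div_iff₀ hmk]; exact le_trans hlo hup
      _ = m + t * (t/m)^k := by
          rw [hn, div_pow, pow_succ, pow_succ, add_div, mul_div_cancel_left₀ _ hmk.ne']; ring
    have hlim : Tendsto (fun k : ℕ => m + t * (t/m)^k) atTop (𝓝 (m + t * 0)) := by
      refine tendsto_const_nhds.add (tendsto_const_nhds.mul ?_)
      exact tendsto_pow_atTop_nhds_zero_of_lt_one (div_nonneg ht0 hm0)
        ((div_lt_one hpos).mpr hε)
    have := ge_of_tendsto' hlim est
    simpa using this
  -- conclude m = 0 by connectedness
  rcases eq_or_lt_of_le hm0 with hmz | hpos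
  · exact ⟨c₀, hmz.symm⟩
  exfalso
  set S : Set ℂ := {c | F c = m} with hS
  have hSopen : IsOpen S := by
    rw [Metric.isOpen_iff]
    intro c hcS
    refine ⟨m ^ (1/ρ), Real.rpow_pos_of_pos hpos _, fun c' hc' => ?_⟩
    have hd : ‖c' - c‖ < m ^ (1/ρ) := by
      rw [Metric.mem_ball, Complex.dist_eq] at hc'; exact hc'
    have hεlt : ‖c' - c‖ ^ ρ < m := by
      calc ‖c' - c‖ ^ ρ < (m ^ (1/ρ)) ^ ρ :=
            Real.rpow_lt_rpow (norm_nonneg _) hd hρ0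
      _ = m := hrpow_inv m hm0
    have := key hpos c hcS (c' - c) hεlt
    simpa [hS] using this
  have hSclosed : IsClosed S := isClosed_eq hFcont continuous_const
  have hSuniv : S = Set.univ := IsClopen.eq_univ ⟨hSclosed, hSopen⟩ ⟨c₀, rfl⟩
  set cbig : ℂ := (((m + x f + 1) ^ (1/ρ) : ℝ) : ℂ) with hcbig
  have hbig : F cbig = m := by
    have : cbig ∈ S := hSuniv ▸ Set.mem_univ _
    exact this
  have hbase2 : (0:ℝ) ≤ m + x f + 1 := by have := hnn f; linarith
  have habs : ‖cbig‖ ^ ρ = m + x f + 1 := by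
    rw [hcbig, Complex.norm_of_nonneg (Real.rpow_nonneg hbase2 _)]
    exact hrpow_inv _ hbase2
  have := hFlow cbig
  rw [habs, hbig] at this
  linarith

/-- Gelfand–Mazur identification of Archimedean fibers: a multiplicative seminorm on a
finitely generated ℂ-algebra restricting to `|·|^ρ` on `ℂ` (with `0 < ρ ≤ 1`) is of the
form `f ↦ |φ(f)|^ρ` for a unique ℂ-algebra homomorphism `φ : A → ℂ`. -/
theorem archimedean_fiber_is_closed_point
    (A : Type*) [CommRing A] [Algebra ℂ A] (hA : Algebra.FiniteType ℂ A)
    (ρ : ℝ) (hρ : ρ ∈ Set.Ioc (0 : ℝ) 1)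
    (x : A → ℝ) (hx : IsMultSeminorm x)
    (hres : ∀ c : ℂ, x (algebraMap ℂ A c) = ‖c‖ ^ ρ) :
    ∃! φ : A →ₐ[ℂ] ℂ, ∀ f : A, x f = ‖φ f‖ ^ ρ := by
  obtain ⟨hρ0, -⟩ := hρ
  obtain ⟨hnn, hx0, hx1, hmul, hadd⟩ := hx
  have hneg : ∀ g : A, x (-g) = x g := by
    intro g
    have h1 : x (algebraMap ℂ A (-1)) = 1 := by rw [hres]; simp [Real.one_rpow]
    rw [map_neg, map_one] at h1
    calc x (-g) = x ((-1) * g) := by ring_nf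
    _ = x g := by rw [hmul, h1, one_mul]
  have hadd0 : ∀ a b : A, x a = 0 → x b = 0 → x (a + b) = 0 := by
    intro a b ha hb
    have h := hadd a b
    rw [ha, hb] at h
    exact le_antisymm (by linarith) (hnn _)
  have hker : ∀ a b : A, x b = 0 → x (a * b) = 0 := by
    intro a b hb; rw [hmul, hb, mul_zero]
  have huniq : ∀ (f : A) (c c' : ℂ),
      x (f - algebraMap ℂ A c) = 0 → x (f - algebraMap ℂ A c') = 0 → c = c' := by
    intro f c c' h h'
    have heq : algebraMap ℂ A (c' - c) = (f - algebraMap ℂ A c) + (-(f - algebraMap ℂ A c')) := by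
      rw [map_sub]; ring
    have h0 : x (algebraMap ℂ A (c' - c)) = 0 := by
      rw [heq]; exact hadd0 _ _ h (by rw [hneg]; exact h')
    rw [hres] at h0
    by_contra hne
    have : c' - c ≠ 0 := sub_ne_zero.mpr (Ne.symm hne)
    have habs : 0 < ‖c' - c‖ := norm_pos_iff.mpr this
    exact absurd h0 (ne_of_gt (Real.rpow_pos_of_pos habs ρ))
  have hspec := fun f => GM.exists_spec hρ0 x ⟨hnn, hx0, hx1, hmul, hadd⟩ hres f
  set φf : A → ℂ := fun f => Classical.choose (hspec f) with hφf
  have hφ : ∀ f : A, x (f - algebraMap ℂ A (φf f)) = 0 := fun f => Classical.choose_spec (hspec f)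
  have hchar : ∀ (f : A) (c : ℂ), x (f - algebraMap ℂ A c) = 0 → φf f = c :=
    fun f c h => huniq f (φf f) c (hφ f) h
  set φ : A →ₐ[ℂ] ℂ :=
    { toFun := φf
      map_one' := hchar 1 1 (by rw [map_one, sub_self, hx0])
      map_mul' := by
        intro f g
        refine hchar (f * g) (φf f * φf g) ?_
        have heq : f * g - algebraMap ℂ A (φf f * φf g)
            = f * (g - algebraMap ℂ A (φf g))
              + (f - algebraMap ℂ A (φf f)) * algebraMap ℂ A (φf g) := by
          rw [map_mul]; ring
        rw [heq]
        exact hadd0 _ _ (hker _ _ (hφ g)) (by rw [mul_comm]; exact hker _ _ (hφ f))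
      map_zero' := hchar 0 0 (by rw [map_zero, sub_self, hx0])
      map_add' := by
        intro f g
        refine hchar (f + g) (φf f + φf g) ?_
        have heq : f + g - algebraMap ℂ A (φf f + φf g)
            = (f - algebraMap ℂ A (φf f)) + (g - algebraMap ℂ A (φf g)) := by
          rw [map_add]; ring
        rw [heq]
        exact hadd0 _ _ (hφ f) (hφ g)
      commutes' := by
        intro c
        have : φf (algebraMap ℂ A c) = c := hchar _ c (by rw [sub_self, hx0])
        simpa using this } with hφdef
  have hmain : ∀ f : A, x f = ‖φ f‖ ^ ρ := by
    intro f
    have hφfeq : φ f = φf f := rfl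
    refine le_antisymm ?_ ?_
    · have heq : f = (f - algebraMap ℂ A (φf f)) + algebraMap ℂ A (φf f) := by ring
      calc x f = x ((f - algebraMap ℂ A (φf f)) + algebraMap ℂ A (φf f)) := congrArg x heq
      _ ≤ x (f - algebraMap ℂ A (φf f)) + x (algebraMap ℂ A (φf f)) := hadd _ _
      _ = ‖φ f‖ ^ ρ := by rw [hφ f, hres, zero_add, hφfeq]
    · have heq : algebraMap ℂ A (φf f) = (-(f - algebraMap ℂ A (φf f))) + f := by ring
      calc ‖φ f‖ ^ ρ = x (algebraMap ℂ A (φf f)) := by rw [hres, hφfeq]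
      _ = x ((-(f - algebraMap ℂ A (φf f))) + f) := congrArg x heq
      _ ≤ x (-(f - algebraMap ℂ A (φf f))) + x f := hadd _ _
      _ = x f := by rw [hneg, hφ f, zero_add]
  refine ⟨φ, hmain, ?_⟩
  intro ψ hψ
  ext f
  show ψ f = φf f
  refine (hchar f (ψ f) ?_).symm
  have : x (f - algebraMap ℂ A (ψ f)) = ‖ψ (f - algebraMap ℂ A (ψ f))‖ ^ ρ := hψ _
  rw [map_sub] at this
  have hcom : ψ (algebraMap ℂ A (ψ f)) = ψ f := by
    rw [ψ.commutes]; simp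
  rw [hcom, sub_self, norm_zero, Real.zero_rpow hρ0.ne'] at this
  exact this
end

section
/- Let n ≥ 1, let α₁,…,α_n be positive real numbers that are linearly independent over ℚ, and let a : ℕⁿ → ℂ be a function that is not identically zero and satisfies |a_m| ≤ R^{|m|} for all m ∈ ℕⁿ, for some R ≥ 1, where |m| := m₁+⋯+m_n. Set v := min{⟨m,α⟩ : a_m ≠ 0}, where ⟨m,α⟩ := m₁α₁+⋯+m_nα_n. Then for all real numbers s, t with 0 ≤ s < e^{−v} < t there exists ε > 0 such that for every ρ ∈ (0,ε] and every η ∈ ℂⁿ with |η_i| = e^{−α_i/ρ} for i = 1,…,n, the family (a_m η^m)_{m∈ℕⁿ} is absolutely summable and s < |Σ_{m∈ℕⁿ} a_m η^m|^ρ < t. -/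
open Finset Filter Real Topology

lemma aux_prod_summable (n : ℕ) {q : ℝ} (h0 : 0 ≤ q) (h1 : q < 1)
    (ih : Summable (fun m : Fin n → ℕ => q ^ ∑ i, m i)) :
    Summable (fun p : ℕ × (Fin n → ℕ) => q ^ p.1 * q ^ ∑ i, p.2 i) :=
  Summable.mul_of_nonneg (f := fun k : ℕ => q ^ k) (g := fun y : Fin n → ℕ => q ^ ∑ i, y i)
    (summable_geometric_of_lt_one h0 h1) ih
    (fun k => pow_nonneg h0 k) (fun _ => pow_nonneg h0 _)

lemma aux_summable (n : ℕ) {q : ℝ} (h0 : 0 ≤ q) (h1 : q < 1) :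
    Summable (fun m : Fin n → ℕ => q ^ ∑ i, m i) := by
  induction n with
  | zero => exact Summable.of_finite
  | succ n ih =>
    rw [← (Fin.consEquiv fun _ : Fin (n+1) => ℕ).summable_iff]
    have hfe : ((fun m : Fin (n+1) → ℕ => q ^ ∑ i, m i) ∘ (Fin.consEquiv fun _ => ℕ))
        = fun p : ℕ × (Fin n → ℕ) => q ^ p.1 * q ^ ∑ i, p.2 i := by
      funext p
      simp only [Function.comp_apply, Fin.consEquiv_apply, Fin.sum_cons, pow_add]
    rw [hfe]
    exact aux_prod_summable n h0 h1 ih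

lemma aux_tsum (n : ℕ) {q : ℝ} (h0 : 0 ≤ q) (h1 : q < 1) :
    (∑' m : Fin n → ℕ, q ^ ∑ i, m i) = ((1 - q)⁻¹) ^ n := by
  induction n with
  | zero =>
    rw [pow_zero]
    rw [tsum_eq_single (fun i => i.elim0) (fun b hb => absurd (Subsingleton.elim b _) hb)]
    simp
  | succ n ih =>
    rw [← (Fin.consEquiv fun _ : Fin (n+1) => ℕ).tsum_eq]
    have hfe : ∀ p : ℕ × (Fin n → ℕ),
        q ^ (∑ i, ((Fin.consEquiv fun _ => ℕ) p) i) = q ^ p.1 * q ^ ∑ i, p.2 i := by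
      intro p; simp only [Fin.consEquiv_apply, Fin.sum_cons, pow_add]
    rw [tsum_congr hfe]
    rw [Summable.tsum_prod (aux_prod_summable n h0 h1 (aux_summable n h0 h1))]
    simp_rw [tsum_mul_left, tsum_mul_right]
    rw [tsum_geometric_of_lt_one h0 h1, ih, pow_succ]
    ring

lemma aux_exp_tendsto {K : ℝ} (hK : 0 < K) :
    Tendsto (fun ρ : ℝ => Real.exp (-K/ρ)) (𝓝[>] 0) (𝓝 0) := by
  have h2 : Tendsto (fun ρ : ℝ => K * ρ⁻¹) (𝓝[>] (0:ℝ)) atTop :=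
    (tendsto_inv_nhdsGT_zero (𝕜 := ℝ)).const_mul_atTop hK
  have h3 : Tendsto (fun ρ : ℝ => -K/ρ) (𝓝[>] (0:ℝ)) atBot := by
    have := tendsto_neg_atTop_atBot.comp h2
    convert this using 2 with ρ
    simp [Function.comp, div_eq_mul_inv]
  exact Real.tendsto_exp_atBot.comp h3

lemma aux_rpow_tendsto {x : ℝ} (hx : 0 < x) :
    Tendsto (fun ρ : ℝ => x ^ ρ) (𝓝[>] (0:ℝ)) (𝓝 1) := by
  have h : Tendsto (fun ρ : ℝ => Real.exp (Real.log x * ρ)) (𝓝 (0:ℝ)) (𝓝 1) := by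
    have hc : Continuous (fun ρ : ℝ => Real.exp (Real.log x * ρ)) := by continuity
    have := hc.tendsto (0:ℝ)
    simpa using this
  have h2 : Tendsto (fun ρ : ℝ => x ^ ρ) (𝓝 (0:ℝ)) (𝓝 1) := by
    simpa only [Real.rpow_def_of_pos hx] using h
  exact h2.mono_left nhdsWithin_le_nhds

/-- The key estimate in the proof of Theorem C: if `a : ℕⁿ → ℂ` has the growth bound
`|a_m| ≤ R^{|m|}` and `v = min{⟨m,α⟩ : a_m ≠ 0}` for rationally independent positive
weights `α`, then for all `0 ≤ s < e^{-v} < t` there is `ε > 0` such that for all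
`ρ ∈ (0,ε]` and all `η` on the polycircle of radii `e^{-α_i/ρ}`, the series
`Σ a_m η^m` is absolutely summable and `s < |Σ a_m η^m|^ρ < t`. -/
theorem monomial_dominance_estimate
    (n : ℕ) (hn : 1 ≤ n) (α : Fin n → ℝ) (hα : ∀ i, 0 < α i)
    (hind : LinearIndependent ℚ α)
    (a : (Fin n → ℕ) → ℂ) (ha : ∃ m, a m ≠ 0)
    (R : ℝ) (hR : 1 ≤ R)
    (hgrowth : ∀ m : Fin n → ℕ, ‖a m‖ ≤ R ^ (∑ i, m i))
    (v : ℝ)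
    (hv : IsLeast {r : ℝ | ∃ m : Fin n → ℕ, a m ≠ 0 ∧ r = ∑ i, (m i : ℝ) * α i} v) :
    ∀ s t : ℝ, 0 ≤ s → s < Real.exp (-v) → Real.exp (-v) < t →
      ∃ ε : ℝ, 0 < ε ∧ ∀ ρ : ℝ, 0 < ρ → ρ ≤ ε →
        ∀ η : Fin n → ℂ, (∀ i, ‖η i‖ = Real.exp (-(α i) / ρ)) →
          Summable (fun m : Fin n → ℕ => ‖a m * ∏ i, η i ^ m i‖) ∧
          s < ‖∑' m : Fin n → ℕ, a m * ∏ i, η i ^ m i‖ ^ ρ ∧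
          ‖∑' m : Fin n → ℕ, a m * ∏ i, η i ^ m i‖ ^ ρ < t := by
  classical
  intro s t hs0 hsv htv
  obtain ⟨m₀, ham₀, hvm₀⟩ := hv.1
  set φ : (Fin n → ℕ) → ℝ := fun m => ∑ i, (m i : ℝ) * α i with hφdef
  -- injectivity of φ
  have hinj : ∀ m m' : Fin n → ℕ, φ m = φ m' → m = m' := by
    intro m m' h
    have hli := Fintype.linearIndependent_iff.mp hind (fun i => (m i : ℚ) - (m' i : ℚ))
    have hz : ∑ i, ((m i : ℚ) - (m' i : ℚ)) • α i = 0 := by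
      have he : ∀ i ∈ univ, ((m i : ℚ) - (m' i : ℚ)) • α i
          = (m i : ℝ) * α i - (m' i : ℝ) * α i := by
        intro i _; rw [Rat.smul_def]; push_cast; ring
      rw [Finset.sum_congr rfl he, Finset.sum_sub_distrib, sub_eq_zero]
      exact h
    funext i
    have h2 := hli hz i
    have h3 : (m i : ℚ) = (m' i : ℚ) := by linarith [h2]
    exact_mod_cast h3
  -- minimum of the weights
  have hne : Nonempty (Fin n) := ⟨⟨0, hn⟩⟩
  set c : ℝ := Finset.univ.inf' ⟨⟨0, hn⟩, mem_univ _⟩ α with hcdef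
  have hc0 : 0 < c := (Finset.lt_inf'_iff _).mpr fun i _ => hα i
  have hcle : ∀ i, c ≤ α i := fun i => Finset.inf'_le _ (mem_univ i)
  have hφ0 : ∀ m, 0 ≤ φ m := fun m =>
    Finset.sum_nonneg fun i _ => mul_nonneg (Nat.cast_nonneg _) (hα i).le
  have hcφ : ∀ m : Fin n → ℕ, c * (∑ i, m i : ℕ) ≤ φ m := by
    intro m
    rw [Nat.cast_sum, Finset.mul_sum]
    refine Finset.sum_le_sum fun i _ => ?_
    rw [mul_comm]
    exact mul_le_mul_of_nonneg_left (hcle i) (Nat.cast_nonneg _)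
  have hv0 : 0 ≤ v := hvm₀ ▸ hφ0 m₀
  have hvle : ∀ m, a m ≠ 0 → v ≤ φ m := fun m hm => hv.2 ⟨m, hm, rfl⟩
  -- second smallest value v'
  obtain ⟨v', hvv', hv'le⟩ : ∃ v', v < v' ∧ ∀ m, a m ≠ 0 → m ≠ m₀ → v' ≤ φ m := by
    set F : Set (Fin n → ℕ) := {m | a m ≠ 0 ∧ m ≠ m₀ ∧ φ m ≤ v + 1} with hF
    set N : ℕ := Nat.ceil ((v+1)/c) with hN
    have hFfin : F.Finite := by
      apply Set.Finite.subset (Set.finite_Icc (fun _ : Fin n => 0) (fun _ => N))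
      intro m hm
      constructor
      · intro i; exact Nat.zero_le _
      · intro i
        have h1 : (m i : ℝ) * α i ≤ φ m :=
          Finset.single_le_sum (f := fun j => (m j : ℝ) * α j)
            (fun j _ => mul_nonneg (Nat.cast_nonneg _) (hα j).le) (mem_univ i)
        have h2 : c * (m i : ℝ) ≤ (m i : ℝ) * α i := by
          rw [mul_comm]; exact mul_le_mul_of_nonneg_left (hcle i) (Nat.cast_nonneg _)
        have h3 : (m i : ℝ) ≤ (v+1)/c := by
          rw [le_div_iff₀ hc0]
          have := hm.2.2
          nlinarith
        have h4 : (m i : ℝ) ≤ (N : ℝ) := h3.trans (Nat.le_ceil _)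
        exact_mod_cast h4
    by_cases hFe : hFfin.toFinset.Nonempty
    · have hTne : (hFfin.toFinset.image φ).Nonempty := hFe.image _
      refine ⟨min (v+1) ((hFfin.toFinset.image φ).min' hTne), ?_, ?_⟩
      · rw [lt_min_iff]
        refine ⟨by linarith, ?_⟩
        rw [Finset.lt_min'_iff]
        intro y hy
        obtain ⟨m, hmF, rfl⟩ := Finset.mem_image.mp hy
        rw [Set.Finite.mem_toFinset] at hmF
        rcases (hvle m hmF.1).lt_or_eq with h | h
        · exact h
        · have : φ m = φ m₀ := h.symm.trans hvm₀ |>.symm ▸ rfl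
          exact absurd (hinj m m₀ (by rw [← h, hvm₀])) hmF.2.1
      · intro m hma hmm
        by_cases hle : φ m ≤ v + 1
        · have hmem : φ m ∈ hFfin.toFinset.image φ :=
            Finset.mem_image_of_mem φ (hFfin.mem_toFinset.mpr ⟨hma, hmm, hle⟩)
          exact (min_le_right _ _).trans (Finset.min'_le _ _ hmem)
        · exact (min_le_left _ _).trans (le_of_not_ge hle)
    · refine ⟨v+1, by linarith, ?_⟩
      intro m hma hmm
      by_contra hcon
      push_neg at hcon
      exact hFe ⟨m, hFfin.mem_toFinset.mpr ⟨hma, hmm, hcon.le⟩⟩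
  -- constants
  set A : ℝ := ‖a m₀‖ with hAdef
  have hA : 0 < A := norm_pos_iff.mpr ham₀
  have hv'0 : 0 < v' := lt_of_le_of_lt hv0 hvv'
  set δ : ℝ := (v' - v)/2 with hδdef
  have hδ : 0 < δ := by rw [hδdef]; linarith
  set w : ℝ := v + δ with hwdef
  set θ : ℝ := δ / v' with hθdef
  have hθ0 : 0 < θ := div_pos hδ hv'0
  have hθ1 : θ ≤ 1 := by
    rw [hθdef, div_le_one hv'0, hδdef]; linarith
  have hwθ : (1 - θ) * v' = w := by
    rw [hθdef, hwdef, hδdef]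
    field_simp
    ring
  -- the key per-m lower bound on φ for m ≠ m₀
  have hkey : ∀ m : Fin n → ℕ, a m ≠ 0 → m ≠ m₀ →
      w + θ * (c * (∑ i, m i : ℕ)) ≤ φ m := by
    intro m hma hmm
    have h1 : v' ≤ φ m := hv'le m hma hmm
    have h2 : c * (∑ i, m i : ℕ) ≤ φ m := hcφ m
    have h3 : (1 - θ) * v' + θ * (c * (∑ i, m i : ℕ)) ≤ (1 - θ) * φ m + θ * φ m := by
      have e1 : (1 - θ) * v' ≤ (1 - θ) * φ m :=
        mul_le_mul_of_nonneg_left h1 (by linarith)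
      have e2 : θ * (c * (∑ i, m i : ℕ)) ≤ θ * φ m :=
        mul_le_mul_of_nonneg_left h2 hθ0.le
      linarith
    rw [hwθ] at h3
    linarith [h3]
  -- eventual smallness conditions
  have he1 : ∀ᶠ ρ in 𝓝[>] (0:ℝ), R * Real.exp (-(θ*c)/ρ) ≤ 1/2 := by
    have h0 : Tendsto (fun ρ : ℝ => R * Real.exp (-(θ*c)/ρ)) (𝓝[>] 0) (𝓝 (R * 0)) :=
      (aux_exp_tendsto (mul_pos hθ0 hc0)).const_mul R
    rw [mul_zero] at h0
    exact (h0.eventually_lt_const (by norm_num : (0:ℝ) < 1/2)).mono fun x h => h.le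
  have he2 : ∀ᶠ ρ in 𝓝[>] (0:ℝ), (2:ℝ)^n * Real.exp (-δ/ρ) ≤ A/2 := by
    have h0 : Tendsto (fun ρ : ℝ => (2:ℝ)^n * Real.exp (-δ/ρ)) (𝓝[>] 0) (𝓝 ((2:ℝ)^n * 0)) :=
      (aux_exp_tendsto hδ).const_mul _
    rw [mul_zero] at h0
    exact (h0.eventually_lt_const (by positivity : (0:ℝ) < A/2)).mono fun x h => h.le
  have ht1 : 1 < t * Real.exp v := by
    have h := mul_lt_mul_of_pos_right htv (Real.exp_pos v)
    rwa [← Real.exp_add, neg_add_cancel, Real.exp_zero] at h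
  have hs1 : s * Real.exp v < 1 := by
    have h := mul_lt_mul_of_pos_right hsv (Real.exp_pos v)
    rwa [← Real.exp_add, neg_add_cancel, Real.exp_zero] at h
  have he3 : ∀ᶠ ρ in 𝓝[>] (0:ℝ), (A + A/2 + 1) ^ ρ < t * Real.exp v :=
    (aux_rpow_tendsto (by positivity)).eventually_lt_const ht1
  have he4 : ∀ᶠ ρ in 𝓝[>] (0:ℝ), s * Real.exp v < (A/2) ^ ρ :=
    (aux_rpow_tendsto (by positivity)).eventually_const_lt hs1
  have hQ : ∀ᶠ ρ in 𝓝[>] (0:ℝ), (R * Real.exp (-(θ*c)/ρ) ≤ 1/2 ∧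
      (2:ℝ)^n * Real.exp (-δ/ρ) ≤ A/2) ∧
      ((A + A/2 + 1) ^ ρ < t * Real.exp v ∧ s * Real.exp v < (A/2) ^ ρ) :=
    (he1.and he2).and (he3.and he4)
  obtain ⟨u, hu, hsub⟩ := mem_nhdsGT_iff_exists_Ioc_subset.mp hQ
  refine ⟨u, hu, ?_⟩
  intro ρ hρ0 hρu η hη
  obtain ⟨⟨hC1, hC2⟩, hC3, hC4⟩ := hsub ⟨hρ0, hρu⟩
  -- absolute value of each term
  have habs : ∀ m : Fin n → ℕ,
      ‖a m * ∏ i, η i ^ m i‖ = ‖a m‖ * Real.exp (-(φ m)/ρ) := by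
    intro m
    rw [norm_mul, norm_prod]
    congr 1
    have hterm : ∀ i ∈ univ, ‖η i ^ m i‖
        = Real.exp ((m i : ℝ) * (-(α i)/ρ)) := by
      intro i _
      rw [norm_pow, hη i, ← Real.exp_nat_mul]
    rw [Finset.prod_congr rfl hterm, ← Real.exp_sum]
    congr 1
    have h5 : ∀ i ∈ univ, (m i : ℝ) * (-(α i)/ρ) = -((m i : ℝ) * α i)/ρ := by
      intro i _; ring
    rw [Finset.sum_congr rfl h5, ← Finset.sum_div, ← Finset.sum_neg_distrib]
  have habs_nonneg : ∀ m : Fin n → ℕ, (0:ℝ) ≤ ‖a m * ∏ i, η i ^ m i‖ :=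
    fun m => norm_nonneg _
  -- geometric bound, for summability
  have hgeo : ∀ m : Fin n → ℕ,
      ‖a m * ∏ i, η i ^ m i‖ ≤ ((1:ℝ)/2) ^ (∑ i, m i) := by
    intro m
    rw [habs m]
    have hle1 : θ * (c * ((∑ i, m i : ℕ) : ℝ)) ≤ φ m := by
      have h2 := hcφ m
      have hM : (0:ℝ) ≤ c * ((∑ i, m i : ℕ) : ℝ) := by positivity
      calc θ * (c * ((∑ i, m i : ℕ) : ℝ)) ≤ 1 * (c * ((∑ i, m i : ℕ) : ℝ)) :=
            mul_le_mul_of_nonneg_right hθ1 hM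
        _ = c * ((∑ i, m i : ℕ) : ℝ) := one_mul _
        _ ≤ φ m := h2
    have h1 : Real.exp (-(φ m)/ρ) ≤ Real.exp (-(θ*c)/ρ) ^ (∑ i, m i) := by
      rw [← Real.exp_nat_mul]
      apply Real.exp_le_exp.mpr
      rw [(by ring : ((∑ i, m i : ℕ) : ℝ) * (-(θ*c)/ρ) = -(θ*(c*((∑ i, m i : ℕ) : ℝ)))/ρ)]
      gcongr
    calc ‖a m‖ * Real.exp (-(φ m)/ρ)
        ≤ R ^ (∑ i, m i) * Real.exp (-(θ*c)/ρ) ^ (∑ i, m i) :=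
          mul_le_mul (hgrowth m) h1 (Real.exp_pos _).le (by positivity)
      _ = (R * Real.exp (-(θ*c)/ρ)) ^ (∑ i, m i) := (mul_pow _ _ _).symm
      _ ≤ ((1:ℝ)/2) ^ (∑ i, m i) := pow_le_pow_left₀ (by positivity) hC1 _
  have hsum : Summable (fun m : Fin n → ℕ => ‖a m * ∏ i, η i ^ m i‖) :=
    Summable.of_nonneg_of_le habs_nonneg hgeo
      (aux_summable n (by norm_num) (by norm_num))
  have hsumC : Summable (fun m : Fin n → ℕ => a m * ∏ i, η i ^ m i) :=
    Summable.of_norm hsum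
  have hsplit := Summable.tsum_eq_add_tsum_ite hsumC m₀
  -- remainder bound
  have hremb : ∀ m : Fin n → ℕ,
      (if m = m₀ then (0:ℝ) else ‖a m * ∏ i, η i ^ m i‖)
      ≤ Real.exp (-w/ρ) * ((1:ℝ)/2) ^ (∑ i, m i) := by
    intro m
    split_ifs with hm
    · positivity
    · by_cases hma : a m = 0
      · rw [hma, zero_mul, norm_zero]
        positivity
      · rw [habs m]
        have hk := hkey m hma hm
        have h1 : Real.exp (-(φ m)/ρ)
            ≤ Real.exp (-w/ρ) * Real.exp (-(θ*c)/ρ) ^ (∑ i, m i) := by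
          rw [← Real.exp_nat_mul, ← Real.exp_add]
          apply Real.exp_le_exp.mpr
          rw [(by ring : -w/ρ + ((∑ i, m i : ℕ) : ℝ) * (-(θ*c)/ρ)
            = -(w + θ*(c*((∑ i, m i : ℕ) : ℝ)))/ρ)]
          gcongr
        calc ‖a m‖ * Real.exp (-(φ m)/ρ)
            ≤ R ^ (∑ i, m i) * (Real.exp (-w/ρ) * Real.exp (-(θ*c)/ρ) ^ (∑ i, m i)) :=
              mul_le_mul (hgrowth m) h1 (Real.exp_pos _).le (by positivity)
          _ = Real.exp (-w/ρ) * (R * Real.exp (-(θ*c)/ρ)) ^ (∑ i, m i) := by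
              rw [mul_pow]; ring
          _ ≤ Real.exp (-w/ρ) * ((1:ℝ)/2) ^ (∑ i, m i) :=
              mul_le_mul_of_nonneg_left (pow_le_pow_left₀ (by positivity) hC1 _)
                (Real.exp_pos _).le
  have hsumR : Summable (fun m : Fin n → ℕ => Real.exp (-w/ρ) * ((1:ℝ)/2) ^ (∑ i, m i)) :=
    (aux_summable n (by norm_num) (by norm_num)).mul_left _
  have hsumI : Summable (fun m : Fin n → ℕ =>
      if m = m₀ then (0:ℝ) else ‖a m * ∏ i, η i ^ m i‖) := by
    refine Summable.of_nonneg_of_le ?_ hremb hsumR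
    intro m; split_ifs
    · exact le_refl 0
    · exact habs_nonneg m
  have hnormite : ∀ m : Fin n → ℕ,
      ‖if m = m₀ then (0:ℂ) else a m * ∏ i, η i ^ m i‖
      = if m = m₀ then (0:ℝ) else ‖a m * ∏ i, η i ^ m i‖ := by
    intro m; split_ifs <;> simp
  have hrem : ‖∑' m : Fin n → ℕ, if m = m₀ then (0:ℂ) else a m * ∏ i, η i ^ m i‖
      ≤ Real.exp (-w/ρ) * 2^n := by
    calc ‖∑' m : Fin n → ℕ, if m = m₀ then (0:ℂ) else a m * ∏ i, η i ^ m i‖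
        = ‖∑' m : Fin n → ℕ, if m = m₀ then (0:ℂ) else a m * ∏ i, η i ^ m i‖ :=
          rfl
      _ ≤ ∑' m : Fin n → ℕ, ‖if m = m₀ then (0:ℂ) else a m * ∏ i, η i ^ m i‖ :=
          norm_tsum_le_tsum_norm (by
            simp only [hnormite]
            exact hsumI)
      _ = ∑' m : Fin n → ℕ, if m = m₀ then (0:ℝ)
            else ‖a m * ∏ i, η i ^ m i‖ := tsum_congr hnormite
      _ ≤ ∑' m : Fin n → ℕ, Real.exp (-w/ρ) * ((1:ℝ)/2) ^ (∑ i, m i) :=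
          Summable.tsum_le_tsum hremb hsumI hsumR
      _ = Real.exp (-w/ρ) * ((1 - (1:ℝ)/2)⁻¹)^n := by
          rw [tsum_mul_left, aux_tsum n (by norm_num) (by norm_num)]
      _ = Real.exp (-w/ρ) * 2^n := by norm_num
  have hterm : ‖a m₀ * ∏ i, η i ^ m₀ i‖ = A * Real.exp (-v/ρ) := by
    rw [habs m₀, hvm₀]
  -- upper and lower bounds for |S|
  have hup : ‖∑' m : Fin n → ℕ, a m * ∏ i, η i ^ m i‖
      ≤ A * Real.exp (-v/ρ) + Real.exp (-w/ρ) * 2^n := by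
    rw [hsplit]
    exact (norm_add_le _ _).trans (add_le_add hterm.le hrem)
  have hlo : A * Real.exp (-v/ρ) - Real.exp (-w/ρ) * 2^n
      ≤ ‖∑' m : Fin n → ℕ, a m * ∏ i, η i ^ m i‖ := by
    have h5 : A * Real.exp (-v/ρ)
        = ‖(∑' m : Fin n → ℕ, a m * ∏ i, η i ^ m i)
          - ∑' m : Fin n → ℕ, if m = m₀ then (0:ℂ) else a m * ∏ i, η i ^ m i‖ := by
      rw [hsplit, add_sub_cancel_right, hterm]
    have h6 : ‖(∑' m : Fin n → ℕ, a m * ∏ i, η i ^ m i)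
          - ∑' m : Fin n → ℕ, if m = m₀ then (0:ℂ) else a m * ∏ i, η i ^ m i‖
        ≤ ‖∑' m : Fin n → ℕ, a m * ∏ i, η i ^ m i‖
          + ‖∑' m : Fin n → ℕ, if m = m₀ then (0:ℂ) else a m * ∏ i, η i ^ m i‖ := by
      exact norm_sub_le _ _
    linarith
  have hE : Real.exp (-w/ρ) * 2^n ≤ (A/2) * Real.exp (-v/ρ) := by
    have h7 : Real.exp (-w/ρ) = Real.exp (-δ/ρ) * Real.exp (-v/ρ) := by
      rw [← Real.exp_add]; congr 1; rw [hwdef]; ring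
    rw [h7]
    calc Real.exp (-δ/ρ) * Real.exp (-v/ρ) * 2^n
        = ((2:ℝ)^n * Real.exp (-δ/ρ)) * Real.exp (-v/ρ) := by ring
      _ ≤ (A/2) * Real.exp (-v/ρ) :=
          mul_le_mul_of_nonneg_right hC2 (Real.exp_pos _).le
  have hlo2 : (A/2) * Real.exp (-v/ρ)
      ≤ ‖∑' m : Fin n → ℕ, a m * ∏ i, η i ^ m i‖ := by
    have h8 : A * Real.exp (-v/ρ) - (A/2) * Real.exp (-v/ρ) = (A/2) * Real.exp (-v/ρ) := by
      ring
    linarith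
  have hup2 : ‖∑' m : Fin n → ℕ, a m * ∏ i, η i ^ m i‖
      ≤ (A + A/2) * Real.exp (-v/ρ) := by
    have h9 : A * Real.exp (-v/ρ) + (A/2) * Real.exp (-v/ρ)
        = (A + A/2) * Real.exp (-v/ρ) := by ring
    linarith
  have hexpρ : (Real.exp (-v/ρ)) ^ ρ = Real.exp (-v) := by
    rw [← Real.exp_mul, div_mul_cancel₀ _ (ne_of_gt hρ0)]
  refine ⟨hsum, ?_, ?_⟩
  · -- lower bound
    have h10 : s = (s * Real.exp v) * Real.exp (-v) := by
      rw [mul_assoc, ← Real.exp_add, add_neg_cancel, Real.exp_zero, mul_one]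
    have h11 : (s * Real.exp v) * Real.exp (-v) < (A/2) ^ ρ * Real.exp (-v) :=
      mul_lt_mul_of_pos_right hC4 (Real.exp_pos _)
    have h12 : (A/2) ^ ρ * Real.exp (-v) = ((A/2) * Real.exp (-v/ρ)) ^ ρ := by
      rw [Real.mul_rpow (by positivity) (Real.exp_pos _).le, hexpρ]
    have h13 : ((A/2) * Real.exp (-v/ρ)) ^ ρ
        ≤ ‖∑' m : Fin n → ℕ, a m * ∏ i, η i ^ m i‖ ^ ρ :=
      Real.rpow_le_rpow (by positivity) hlo2 hρ0.le
    calc s = (s * Real.exp v) * Real.exp (-v) := h10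
      _ < (A/2) ^ ρ * Real.exp (-v) := h11
      _ = ((A/2) * Real.exp (-v/ρ)) ^ ρ := h12
      _ ≤ _ := h13
  · -- upper bound
    have h14 : ‖∑' m : Fin n → ℕ, a m * ∏ i, η i ^ m i‖ ^ ρ
        ≤ ((A + A/2) * Real.exp (-v/ρ)) ^ ρ :=
      Real.rpow_le_rpow (norm_nonneg _) hup2 hρ0.le
    have h15 : ((A + A/2) * Real.exp (-v/ρ)) ^ ρ = (A + A/2) ^ ρ * Real.exp (-v) := by
      rw [Real.mul_rpow (by positivity) (Real.exp_pos _).le, hexpρ]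
    have h16 : (A + A/2) ^ ρ ≤ (A + A/2 + 1) ^ ρ :=
      Real.rpow_le_rpow (by positivity) (by linarith) hρ0.le
    have h17 : (A + A/2 + 1) ^ ρ * Real.exp (-v) < (t * Real.exp v) * Real.exp (-v) :=
      mul_lt_mul_of_pos_right hC3 (Real.exp_pos _)
    have h18 : (t * Real.exp v) * Real.exp (-v) = t := by
      rw [mul_assoc, ← Real.exp_add, add_neg_cancel, Real.exp_zero, mul_one]
    calc ‖∑' m : Fin n → ℕ, a m * ∏ i, η i ^ m i‖ ^ ρ
        ≤ ((A + A/2) * Real.exp (-v/ρ)) ^ ρ := h14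
      _ = (A + A/2) ^ ρ * Real.exp (-v) := h15
      _ ≤ (A + A/2 + 1) ^ ρ * Real.exp (-v) :=
          mul_le_mul_of_nonneg_right h16 (Real.exp_pos _).le
      _ < (t * Real.exp v) * Real.exp (-v) := h17
      _ = t := h18
end

section
/- Let N ≥ 1, let 𝔞 be an ideal of the polynomial ring ℂ[z₁,…,z_N], let 0 ≤ ρ ≤ ρ' ≤ 1, and for each 1 ≤ i ≤ N let s_i ∈ ℝ and t_i ∈ ℝ ∪ {+∞} with s_i ≤ t_i. Let W be the set of multiplicative seminorms x on ℂ[z₁,…,z_N] such that x(c·1) ≤ ‖c‖ for all c ∈ ℂ, e^{ρ} ≤ x(e·1) ≤ e^{ρ'} where e = exp(1), e^{−t_i} ≤ x(z_i) ≤ e^{−s_i} for each i (with the convention e^{−∞} := 0), and x(f) = 0 for all f ∈ 𝔞. Then W is compact in the topology of pointwise convergence. -/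
/-- `e^{-t}` for `t ∈ ℝ ∪ {+∞}`, with the convention `e^{-∞} = 0`. -/
noncomputable def expNegExt : WithTop ℝ → ℝ :=
  WithTop.recTopCoe 0 fun r => Real.exp (-r)

lemma mult_seminorm_sum_le {A : Type*} [CommRing A] {x : A → ℝ} (hx : IsMultSeminorm x)
    {ι : Type*} (u : Finset ι) (g : ι → A) :
    x (∑ i ∈ u, g i) ≤ ∑ i ∈ u, x (g i) := by
  classical
  induction u using Finset.induction_on with
  | empty => simp [hx.2.1]
  | insert j u hni ih =>
      rw [Finset.sum_insert hni, Finset.sum_insert hni]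
      exact le_trans (hx.2.2.2.2 _ _) (by linarith)

lemma mult_seminorm_prod {A : Type*} [CommRing A] {x : A → ℝ} (hx : IsMultSeminorm x)
    {ι : Type*} (u : Finset ι) (g : ι → A) :
    x (∏ i ∈ u, g i) = ∏ i ∈ u, x (g i) := by
  classical
  induction u using Finset.induction_on with
  | empty => simp [hx.2.2.1]
  | insert j u hni ih =>
      rw [Finset.prod_insert hni, Finset.prod_insert hni, hx.2.2.2.1, ih]

/-- The compactness assertion at the heart of the properness part of Proposition 2.1:
the set of multiplicative seminorms on `ℂ[z₁,…,z_N]` bounded on `ℂ` by the hybrid norm,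
with `e^ρ ≤ x(e·1) ≤ e^{ρ'}`, `e^{-t_i} ≤ x(z_i) ≤ e^{-s_i}` and vanishing on the ideal
`𝔞`, is compact in the topology of pointwise convergence. -/
theorem trop_preimage_compact
    (N : ℕ) (hN : 1 ≤ N) (a : Ideal (MvPolynomial (Fin N) ℂ))
    (ρ ρ' : ℝ) (hρ : 0 ≤ ρ) (hρρ' : ρ ≤ ρ') (hρ' : ρ' ≤ 1)
    (s : Fin N → ℝ) (t : Fin N → WithTop ℝ) (hst : ∀ i, (s i : WithTop ℝ) ≤ t i) :
    IsCompact {x : MvPolynomial (Fin N) ℂ → ℝ |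
      IsMultSeminorm x ∧
      (∀ c : ℂ, x (MvPolynomial.C c) ≤ hybridNorm c) ∧
      Real.exp ρ ≤ x (MvPolynomial.C ((Real.exp 1 : ℝ) : ℂ)) ∧
      x (MvPolynomial.C ((Real.exp 1 : ℝ) : ℂ)) ≤ Real.exp ρ' ∧
      (∀ i : Fin N, expNegExt (t i) ≤ x (MvPolynomial.X i) ∧
        x (MvPolynomial.X i) ≤ Real.exp (-(s i))) ∧
      (∀ f ∈ a, x f = 0)} := by
  classical
  set A := MvPolynomial (Fin N) ℂ
  set B : A → ℝ := fun f =>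
    ∑ m ∈ f.support, hybridNorm (MvPolynomial.coeff m f) * ∏ i, Real.exp (-(s i)) ^ (m i)
    with hB
  have hcompact : IsCompact {x : A → ℝ | ∀ f, x f ∈ Set.Icc 0 (B f)} :=
    isCompact_pi_infinite fun f => isCompact_Icc
  apply IsCompact.of_isClosed_subset hcompact
  · -- closedness
    simp only [IsMultSeminorm, Set.setOf_and, Set.setOf_forall]
    repeat' apply IsClosed.inter
    · exact isClosed_iInter fun f => isClosed_le continuous_const (continuous_apply f)
    · exact isClosed_eq (continuous_apply _) continuous_const
    · exact isClosed_eq (continuous_apply _) continuous_const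
    · exact isClosed_iInter fun f => isClosed_iInter fun g =>
        isClosed_eq (continuous_apply _) ((continuous_apply f).mul (continuous_apply g))
    · exact isClosed_iInter fun f => isClosed_iInter fun g =>
        isClosed_le (continuous_apply _) ((continuous_apply f).add (continuous_apply g))
    · exact isClosed_iInter fun c => isClosed_le (continuous_apply _) continuous_const
    · exact isClosed_le continuous_const (continuous_apply _)
    · exact isClosed_le (continuous_apply _) continuous_const
    · exact isClosed_iInter fun i => IsClosed.inter
        (isClosed_le continuous_const (continuous_apply _))
        (isClosed_le (continuous_apply _) continuous_const)
    · exact isClosed_iInter fun f => isClosed_iInter fun _ =>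
        isClosed_eq (continuous_apply _) continuous_const
  · -- inclusion
    rintro x ⟨hx, hC, -, -, hX, -⟩ f
    refine ⟨hx.1 f, ?_⟩
    conv_lhs => rw [(MvPolynomial.as_sum f)]
    refine le_trans (mult_seminorm_sum_le hx _ _) (Finset.sum_le_sum fun m hm => ?_)
    rw [MvPolynomial.monomial_eq, hx.2.2.2.1]
    have hXi : ∀ i, 0 ≤ x (MvPolynomial.X i) := fun i => hx.1 _
    have hprod : x (m.prod fun n e => (MvPolynomial.X n : A) ^ e)
        = ∏ i, x (MvPolynomial.X i) ^ (m i) := by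
      rw [Finsupp.prod_fintype]
      · rw [mult_seminorm_prod hx]
        refine Finset.prod_congr rfl fun i _ => ?_
        induction (m i) with
        | zero => simp [hx.2.2.1]
        | succ n ih => rw [pow_succ, pow_succ, hx.2.2.2.1, ih]
      · intro i; simp
    rw [hprod]
    have h1 : 0 ≤ ∏ i, x (MvPolynomial.X i) ^ (m i) :=
      Finset.prod_nonneg fun i _ => pow_nonneg (hXi i) _
    have h2 : ∏ i, x (MvPolynomial.X i) ^ (m i) ≤ ∏ i, Real.exp (-(s i)) ^ (m i) :=
      Finset.prod_le_prod (fun i _ => pow_nonneg (hXi i) _)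
        (fun i _ => pow_le_pow_left₀ (hXi i) (hX i).2 _)
    have h3 : 0 ≤ hybridNorm (MvPolynomial.coeff m f) := by
      unfold hybridNorm; split <;> positivity
    calc x (MvPolynomial.C (MvPolynomial.coeff m f)) * ∏ i, x (MvPolynomial.X i) ^ (m i)
        ≤ hybridNorm (MvPolynomial.coeff m f) * ∏ i, x (MvPolynomial.X i) ^ (m i) :=
          mul_le_mul_of_nonneg_right (hC _) h1
      _ ≤ hybridNorm (MvPolynomial.coeff m f) * ∏ i, Real.exp (-(s i)) ^ (m i) :=
          mul_le_mul_of_nonneg_left h2 h3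
end

section
/- Let x be a multiplicative seminorm on the Laurent polynomial ring ℂ[t,t^{−1}] such that x(c·1) = 1 for all c ∈ ℂ* and x(t) = e^{−1}. Then for every nonzero Laurent polynomial f = Σ_j a_j t^j one has x(f) = e^{−ord(f)}, where ord(f) := min{j ∈ ℤ : a_j ≠ 0}. In particular, there is exactly one such seminorm: the restriction to ℂ[t,t^{−1}] of the t-adic absolute value on ℂ((t)) normalized by |t| = e^{−1} and trivial on ℂ*. -/
/-- The coefficients of a Laurent polynomial, as a finitely supported function `ℤ →₀ ℂ`. -/
def lcoeff (f : LaurentPolynomial ℂ) : ℤ →₀ ℂ := f.coeff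

open LaurentPolynomial Finset in
private lemma mul_apply_min' (p q : LaurentPolynomial ℂ) (j k : ℤ)
    (hp : ∀ i ∈ p.coeff.support, j ≤ i) (hq : ∀ i ∈ q.coeff.support, k ≤ i) :
    (p * q).coeff (j + k) = p.coeff j * q.coeff k := by
  classical
  rw [AddMonoidAlgebra.coeff_mul, Finsupp.sum, Finset.sum_eq_single j]
  · rw [Finsupp.sum, Finset.sum_eq_single k]
    · rw [if_pos rfl]
    · intro b hb hbk
      rw [if_neg]
      intro he
      have : k < b := lt_of_le_of_ne (hq b hb) (Ne.symm hbk)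
      omega
    · intro h
      rw [if_pos rfl, Finsupp.notMem_support_iff.1 h, mul_zero]
  · intro a ha haj
    have hja : j < a := lt_of_le_of_ne (hp a ha) (Ne.symm haj)
    refine Finset.sum_eq_zero fun b hb => ?_
    simp only []
    rw [if_neg]
    have := hq b hb
    omega
  · intro h
    rw [Finsupp.notMem_support_iff.1 h]
    simp

private lemma geom_bound (t : Finset ℕ) :
    ∑ k ∈ t, Real.exp (-1) ^ k ≤ (1 - Real.exp (-1))⁻¹ := by
  obtain ⟨N, hN⟩ := t.exists_nat_subset_range
  have h0 : (0:ℝ) < Real.exp (-1) := Real.exp_pos _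
  have h1 : Real.exp (-1) < 1 := Real.exp_lt_one_iff.2 (by norm_num)
  have hle : ∑ k ∈ t, Real.exp (-1) ^ k ≤ ∑ k ∈ Finset.range N, Real.exp (-1) ^ k :=
    Finset.sum_le_sum_of_subset_of_nonneg hN (fun i _ _ => by positivity)
  refine hle.trans ?_
  rw [geom_sum_eq (by linarith) N]
  rw [show (Real.exp (-1) ^ N - 1) / (Real.exp (-1) - 1)
      = (1 - Real.exp (-1) ^ N) / (1 - Real.exp (-1)) by
    rw [← neg_div_neg_eq]; ring_nf]
  rw [← one_div]
  have hpow : (0:ℝ) ≤ Real.exp (-1) ^ N := by positivity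
  gcongr
  · linarith

open LaurentPolynomial in
private lemma key_lemma (x : LaurentPolynomial ℂ → ℝ) (hx : IsMultSeminorm x)
    (htriv : ∀ c : ℂ, c ≠ 0 → x (algebraMap ℂ (LaurentPolynomial ℂ) c) = 1)
    (ht : x (LaurentPolynomial.T 1) = Real.exp (-1)) :
    ∀ f : LaurentPolynomial ℂ, f ≠ 0 →
      ∀ j : ℤ, IsLeast {i : ℤ | lcoeff f i ≠ 0} j → x f = Real.exp (-(j : ℝ)) := by
  classical
  obtain ⟨hpos, h0, h1, hmul, hadd⟩ := hx
  -- x on T n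
  have hC : ∀ c : ℂ, c ≠ 0 → x (C c) = 1 := by
    intro c hc
    rw [C_eq_algebraMap]; exact htriv c hc
  have hTnat : ∀ n : ℕ, x (T (n : ℤ)) = Real.exp (-(n : ℝ)) := by
    intro n
    induction n with
    | zero => simp [T_zero, h1]
    | succ n ih =>
        have : ((n : ℤ) + 1) = (n : ℤ) + 1 := rfl
        rw [show ((n + 1 : ℕ) : ℤ) = (n : ℤ) + 1 by push_cast; ring, T_add, hmul, ih, ht,
          ← Real.exp_add]
        push_cast; ring_nf
  have hT : ∀ n : ℤ, x (T n) = Real.exp (-(n : ℝ)) := by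
    intro n
    rcases le_or_gt 0 n with h | h
    · lift n to ℕ using h
      exact_mod_cast hTnat n
    · obtain ⟨m, hm⟩ : ∃ m : ℕ, n = -(m : ℤ) := ⟨n.natAbs, by omega⟩
      subst hm
      have hinv : x (T (-(m:ℤ))) * x (T (m:ℤ)) = 1 := by
        rw [← hmul, ← T_add, neg_add_cancel, T_zero, h1]
      rw [hTnat] at hinv
      have hexp : Real.exp (-(m:ℝ)) ≠ 0 := Real.exp_ne_zero _
      have : x (T (-(m:ℤ))) = (Real.exp (-(m:ℝ)))⁻¹ := by
        field_simp at hinv ⊢; linarith [hinv]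
      rw [this, ← Real.exp_neg]
      push_cast; ring_nf
  have hsingle : ∀ (c : ℂ), c ≠ 0 → ∀ n : ℤ,
      x (AddMonoidAlgebra.single n c) = Real.exp (-(n : ℝ)) := by
    intro c hc n
    rw [single_eq_C_mul_T, hmul, hC c hc, hT, one_mul]
  -- x (-f) = x f
  have hneg1 : x (-1) = 1 := by
    have h2 : x (-1) * x (-1) = 1 := by
      rw [← hmul]; norm_num [h1]
    rcases mul_self_eq_one_iff.1 h2 with h | h
    · exact h
    · nlinarith [hpos (-1 : LaurentPolynomial ℂ)]
  have hneg : ∀ f, x (-f) = x f := by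
    intro f
    rw [show -f = -1 * f by ring, hmul, hneg1, one_mul]
  -- subadditivity over sums
  have hsum : ∀ (s : Finset ℤ) (g : ℤ → LaurentPolynomial ℂ),
      x (∑ i ∈ s, g i) ≤ ∑ i ∈ s, x (g i) := by
    intro s g
    induction s using Finset.cons_induction with
    | empty => simp [h0]
    | cons a s ha ih =>
        rw [Finset.sum_cons, Finset.sum_cons]
        exact (hadd _ _).trans (by linarith)
  -- the fundamental upper bound
  set K : ℝ := (1 - Real.exp (-1))⁻¹ with hK
  have he1 : Real.exp (-1) < 1 := Real.exp_lt_one_iff.2 (by norm_num)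
  have hKpos : 0 < K := by rw [hK]; exact inv_pos.2 (by linarith)
  have hK1 : 1 ≤ K := by
    have h' : 0 < 1 - Real.exp (-1) := by linarith
    rw [hK, le_inv_comm₀ one_pos h', inv_one]
    linarith [Real.exp_pos (-1:ℝ)]
  have hU : ∀ (f : LaurentPolynomial ℂ) (m : ℤ), (∀ i ∈ f.coeff.support, m ≤ i) →
      x f ≤ Real.exp (-(m : ℝ)) * K := by
    intro f m hm
    have hf : f = ∑ i ∈ f.coeff.support, AddMonoidAlgebra.single i (f.coeff i) := by
      conv_lhs => rw [← AddMonoidAlgebra.sum_coeff_single f]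
      rfl
    calc x f = x (∑ i ∈ f.coeff.support, AddMonoidAlgebra.single i (f.coeff i)) := by rw [← hf]
      _ ≤ ∑ i ∈ f.coeff.support, x (AddMonoidAlgebra.single i (f.coeff i)) := hsum _ _
      _ = ∑ i ∈ f.coeff.support, Real.exp (-(i : ℝ)) := by
              refine Finset.sum_congr rfl fun i hi => ?_
              exact hsingle _ (Finsupp.mem_support_iff.1 hi) i
      _ = Real.exp (-(m:ℝ)) * ∑ i ∈ f.coeff.support, Real.exp (-1) ^ (i - m).toNat := by
              rw [Finset.mul_sum]
              refine Finset.sum_congr rfl fun i hi => ?_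
              rw [← Real.exp_nat_mul, ← Real.exp_add]
              congr 1
              have hmi := hm i hi
              have htn : (((i - m).toNat : ℤ)) = i - m :=
                Int.toNat_of_nonneg (by omega)
              have : ((i - m).toNat : ℝ) = (i : ℝ) - m := by
                rw [← Int.cast_natCast, htn]; push_cast; ring
              rw [this]; ring
      _ ≤ Real.exp (-(m:ℝ)) * K := by
              have hinj : Set.InjOn (fun i : ℤ => (i - m).toNat) f.coeff.support := by
                intro a ha b hb hab
                have := hm a ha; have := hm b hb
                simp only at hab; omega
              have himg : ∑ k ∈ f.coeff.support.image (fun i : ℤ => (i - m).toNat),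
                  Real.exp (-1) ^ k = ∑ i ∈ f.coeff.support, Real.exp (-1) ^ (i - m).toNat :=
                Finset.sum_image (fun a ha b hb hab => hinj ha hb hab)
              rw [← himg]
              have := geom_bound (f.coeff.support.image (fun i : ℤ => (i - m).toNat))
              have hexp : (0:ℝ) < Real.exp (-(m:ℝ)) := Real.exp_pos _
              nlinarith
  -- x of powers
  have hxpow : ∀ (f : LaurentPolynomial ℂ) (n : ℕ), x (f ^ n) = x f ^ n := by
    intro f n
    induction n with
    | zero => simp [h1]
    | succ n ih => rw [pow_succ, pow_succ, hmul, ih]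
  -- support bound for powers
  have hsupp_pow : ∀ (f : LaurentPolynomial ℂ) (j : ℤ), (∀ i ∈ f.coeff.support, j ≤ i) →
      ∀ n : ℕ, ∀ i ∈ (f ^ (n+1)).coeff.support, ((n:ℤ)+1) * j ≤ i := by
    intro f j hj n
    induction n with
    | zero => simpa using hj
    | succ n ih =>
        intro i hi
        rw [pow_succ] at hi
        have := AddMonoidAlgebra.support_coeff_mul_subset (f ^ (n+1)) f hi
        rw [Finset.mem_add] at this
        obtain ⟨a, ha, b, hb, rfl⟩ := this
        have h1 := ih a ha
        have h2 := hj b hb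
        push_cast
        nlinarith
  -- coefficient of powers at the minimum
  have hcoeff_pow : ∀ (f : LaurentPolynomial ℂ) (j : ℤ), (∀ i ∈ f.coeff.support, j ≤ i) →
      ∀ n : ℕ, (f ^ (n+1)).coeff (((n:ℤ)+1) * j) = (f.coeff j) ^ (n+1) := by
    intro f j hj n
    induction n with
    | zero => simp
    | succ n ih =>
        rw [pow_succ]
        have hmm := mul_apply_min' (f ^ (n+1)) f (((n:ℤ)+1) * j) j (hsupp_pow f j hj n) hj
        have hgoal : (((n+1:ℕ):ℤ)+1) * j = ((n:ℤ)+1) * j + j := by push_cast; ring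
        rw [hgoal, hmm, ih]
        ring
  -- main argument
  intro f hf j hj
  obtain ⟨hj1, hj2⟩ := hj
  have hj1' : f.coeff j ≠ 0 := hj1
  have hj2' : ∀ i ∈ f.coeff.support, j ≤ i := fun i hi => hj2 (Finsupp.mem_support_iff.1 hi)
  set r := x f with hr
  set er := Real.exp (-(j:ℝ)) with her
  have herpos : 0 < er := Real.exp_pos _
  have hercast : ∀ n : ℕ, Real.exp (-((((n:ℤ)+1) * j : ℤ) : ℝ)) = er ^ (n+1) := by
    intro n
    rw [her, ← Real.exp_nat_mul]
    congr 1
    push_cast; ring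
  -- upper bound on r^(n+1)
  have hup : ∀ n : ℕ, r ^ (n+1) ≤ er ^ (n+1) * K := by
    intro n
    rw [hr, ← hxpow]
    have := hU (f ^ (n+1)) (((n:ℤ)+1) * j) (hsupp_pow f j hj2' n)
    rwa [hercast n] at this
  -- lower bound on r^(n+1)
  set c : ℝ := 1 - Real.exp (-1) * K with hc
  have hcpos : 0 < c := by
    rw [hc, hK]
    have h2 : Real.exp (-1) < 1/2 := by
      rw [Real.exp_neg]
      rw [inv_lt_comm₀ (Real.exp_pos 1) (by norm_num)]
      have := Real.exp_one_gt_d9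
      norm_num
      linarith
    have : Real.exp (-1) * (1 - Real.exp (-1))⁻¹ < 1 := by
      rw [mul_inv_lt_iff₀ (by linarith [Real.exp_pos (-1:ℝ)])]
      linarith
    linarith
  have hc1 : c ≤ 1 := by
    rw [hc]
    nlinarith [Real.exp_pos (-1:ℝ), hKpos]
  have hlow : ∀ n : ℕ, er ^ (n+1) * c ≤ r ^ (n+1) := by
    intro n
    set N : ℤ := ((n:ℤ)+1) * j with hN
    set sN : LaurentPolynomial ℂ := AddMonoidAlgebra.single N ((f.coeff j) ^ (n+1)) with hsN
    set g : LaurentPolynomial ℂ := f ^ (n+1) - sN with hg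
    have hgsupp : ∀ i ∈ g.coeff.support, N + 1 ≤ i := by
      intro i hi
      have hgi : g.coeff i ≠ 0 := Finsupp.mem_support_iff.1 hi
      have hgi' : g.coeff i = (f ^ (n+1)).coeff i
          - (Finsupp.single N ((f.coeff j) ^ (n+1)) : ℤ →₀ ℂ) i := rfl
      by_cases hiN : i = N
      · exfalso
        rw [hgi', hiN, Finsupp.single_apply, if_pos rfl, hcoeff_pow f j hj2' n] at hgi
        simp at hgi
      · have hiNge : N ≤ i := by
          have hfi : (f ^ (n+1)).coeff i ≠ 0 := by
            rw [hgi', Finsupp.single_apply, if_neg (fun h => hiN h.symm), sub_zero] at hgi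
            exact hgi
          exact hsupp_pow f j hj2' n i (Finsupp.mem_support_iff.2 hfi)
        omega
    have hxg : x g ≤ er ^ (n+1) * Real.exp (-1) * K := by
      have := hU g (N + 1) hgsupp
      have heq : Real.exp (-((N + 1 : ℤ) : ℝ)) = er ^ (n+1) * Real.exp (-1) := by
        rw [← hercast n, ← Real.exp_add, hN]
        congr 1
        push_cast
        ring
      rw [heq] at this
      linarith
    have hsing : x sN = er ^ (n+1) := by
      rw [hsN, hsingle _ (pow_ne_zero _ hj1') N, hN]
      exact hercast n
    have hdecomp : sN = f ^ (n+1) + (-g) := by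
      rw [hg]; ring
    have : er ^ (n+1) ≤ r ^ (n+1) + x g := by
      rw [← hsing, hdecomp]
      calc x (f ^ (n+1) + -g) ≤ x (f ^ (n+1)) + x (-g) := hadd _ _
        _ = r ^ (n+1) + x g := by rw [hneg, hxpow, hr]
    nlinarith [pow_pos herpos (n+1)]
  -- conclude r = er
  have hrle : r ≤ er := by
    by_contra hcon
    push_neg at hcon
    have h1' : 1 < r / er := (one_lt_div herpos).2 hcon
    obtain ⟨n, hn⟩ := pow_unbounded_of_one_lt K h1'
    have hbound : (r / er) ^ n ≤ K := by
      cases n with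
      | zero => simpa using hK1
      | succ m =>
          have := hup m
          rw [div_pow, div_le_iff₀ (pow_pos herpos _)]
          nlinarith [pow_pos herpos (m+1)]
    linarith
  have hrge : er ≤ r := by
    have hrpos : 0 < r := by
      have := hlow 0
      simp only [zero_add, pow_one] at this
      nlinarith
    by_contra hcon
    push_neg at hcon
    have h1' : 1 < er / r := (one_lt_div hrpos).2 hcon
    obtain ⟨n, hn⟩ := pow_unbounded_of_one_lt c⁻¹ h1'
    have hbound : (er / r) ^ n ≤ c⁻¹ := by
      cases n with
      | zero =>
          simp only [pow_zero]
          rw [le_inv_comm₀ one_pos hcpos]  -- 1 ≤ c⁻¹ ↔ c ≤ 1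
          simpa using hc1
      | succ m =>
          have := hlow m
          rw [div_pow, div_le_iff₀ (pow_pos hrpos _), inv_mul_eq_div, le_div_iff₀ hcpos]
          nlinarith [pow_pos hrpos (m+1), pow_pos herpos (m+1)]
    linarith
  linarith

/-- §4 of the paper: a multiplicative seminorm on `ℂ[t,t^{-1}]` which is trivial on `ℂ^*`
and satisfies `x(t) = e^{-1}` is given by `x(f) = e^{-ord(f)}`; in particular it is the
unique such seminorm (the restriction of the `t`-adic absolute value on `ℂ((t))`). -/
theorem central_fiber_seminorm_unique
    (x : LaurentPolynomial ℂ → ℝ) (hx : IsMultSeminorm x)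
    (htriv : ∀ c : ℂ, c ≠ 0 → x (algebraMap ℂ (LaurentPolynomial ℂ) c) = 1)
    (ht : x (LaurentPolynomial.T 1) = Real.exp (-1)) :
    (∀ f : LaurentPolynomial ℂ, f ≠ 0 →
      ∀ j : ℤ, IsLeast {i : ℤ | lcoeff f i ≠ 0} j → x f = Real.exp (-(j : ℝ))) ∧
    (∀ y : LaurentPolynomial ℂ → ℝ, IsMultSeminorm y →
      (∀ c : ℂ, c ≠ 0 → y (algebraMap ℂ (LaurentPolynomial ℂ) c) = 1) →
      y (LaurentPolynomial.T 1) = Real.exp (-1) → y = x) := by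
  refine ⟨key_lemma x hx htriv ht, ?_⟩
  intro y hy hytriv hyt
  funext f
  by_cases hf : f = 0
  · rw [hf, hy.2.1, hx.2.1]
  · have hne : f.coeff.support.Nonempty := by
      rw [Finsupp.support_nonempty_iff, Ne, AddMonoidAlgebra.coeff_eq_zero]; exact hf
    set j := f.coeff.support.min' hne with hjdef
    have hjleast : IsLeast {i : ℤ | lcoeff f i ≠ 0} j := by
      constructor
      · exact Finsupp.mem_support_iff.1 (f.coeff.support.min'_mem hne)
      · intro i hi
        exact Finset.min'_le _ _ (Finsupp.mem_support_iff.2 hi)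
    rw [key_lemma x hx htriv ht f hf j hjleast,
      key_lemma y hy hytriv hyt f hf j hjleast]
end
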